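/- arXiv:1312.7730 — 10 statements merged into one kernel-verified Lean document; each statement's English description precedes it below -/
import Mathlib

section
/- Let X be a normed space, φ, f: X → (-∞,∞] with φ(0)=0, T(x) = inf{φ(y−x)+f(y) : y ∈ X}, and let x̄ satisfy T(x̄) = f(x̄) with T(x̄) finite. Then for every ε ≥ 0, every x* in the ε-Fréchet subdifferential of T at x̄ satisfies −x* ∈ ∂̂_ε φ(0); i.e., ∂̂_ε T(x̄) ⊂ −∂̂_ε φ(0). -/
noncomputable section
open Filter Topology

variable {X : Type*} [NormedAddCommGroup X] [NormedSpace ℝ X]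

/-- ε-Fréchet subdifferential of g : X → EReal at x₀, as a set of continuous linear functionals. -/
def eFrechetSub (ε : ℝ) (g : X → EReal) (x₀ : X) : Set (X →L[ℝ] ℝ) :=
  {p | (-(ε : EReal)) ≤ liminf (fun x =>
      (g x - g x₀ - ((p (x - x₀) : ℝ) : EReal)) * ((‖x - x₀‖⁻¹ : ℝ) : EReal)) (𝓝[≠] x₀)}

/-- s-Hölder subdifferential of g at x₀. -/
def holderSub (s : ℝ) (g : X → EReal) (x₀ : X) : Set (X →L[ℝ] ℝ) :=
  {p | (⊥ : EReal) < liminf (fun x =>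
      (g x - g x₀ - ((p (x - x₀) : ℝ) : EReal)) * (((‖x - x₀‖ ^ (1 + s))⁻¹ : ℝ) : EReal)) (𝓝[≠] x₀)}

/-- Infimal convolution T(x) = inf_y (φ(y - x) + f(y)). -/
def infConv (φ f : X → EReal) : X → EReal := fun x => ⨅ y, (φ (y - x) + f y)

/-- Minkowski gauge ρ_F(x) = inf {t ≥ 0 : x ∈ tF}, with inf ∅ = +∞. -/
def gauge' (F : Set X) : X → EReal := fun x =>
  sInf {r : EReal | ∃ t : ℝ, 0 ≤ t ∧ (∃ u ∈ F, x = t • u) ∧ r = (t : EReal)}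

open Classical in
def eIndicator (Ω : Set X) : X → EReal := fun x => if x ∈ Ω then (0 : EReal) else ⊤

/-- Convexity for extended-real-valued functions. -/
def ERealConvexOn (g : X → EReal) : Prop :=
  ∀ x y : X, ∀ t : ℝ, 0 ≤ t → t ≤ 1 →
    g (t • x + (1 - t) • y) ≤ ((t : ℝ) : EReal) * g x + (((1 - t : ℝ)) : EReal) * g y

theorem stmt2 (φ f : X → EReal) (hφbot : ∀ x, φ x ≠ ⊥) (hfbot : ∀ x, f x ≠ ⊥)
    (hφ0 : φ 0 = 0) (x₀ : X) (hS : infConv φ f x₀ = f x₀) (hfin : f x₀ ≠ ⊤) :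
    ∀ ε : ℝ, 0 ≤ ε →
      eFrechetSub ε (infConv φ f) x₀ ⊆ {p | -p ∈ eFrechetSub ε φ 0} := by
  intro ε hε p hp
  simp only [eFrechetSub, Set.mem_setOf_eq] at hp ⊢
  -- rewrite given liminf via the homeomorphism u ↦ x₀ - u
  have hmap : map (fun u : X => x₀ - u) (𝓝[≠] (0:X)) = 𝓝[≠] x₀ := by
    have h1 := (Homeomorph.subLeft x₀ : X ≃ₜ X).map_punctured_nhds_eq 0
    have h2 : (Homeomorph.subLeft x₀ : X ≃ₜ X) (0:X) = x₀ := by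
      simp [Homeomorph.subLeft]
    rw [h2] at h1
    exact h1
  rw [← hmap, ← Filter.liminf_comp] at hp
  refine le_trans hp (Filter.liminf_le_liminf ?_)
  filter_upwards [eventually_mem_nhdsWithin] with u hu
  have hune : u ≠ 0 := hu
  have key : infConv φ f (x₀ - u) ≤ φ u + f x₀ := by
    have : φ (x₀ - (x₀ - u)) + f x₀ = φ u + f x₀ := by
      congr 1; congr 1; abel
    calc infConv φ f (x₀ - u) ≤ φ (x₀ - (x₀ - u)) + f x₀ := iInf_le _ x₀
      _ = φ u + f x₀ := this
  -- factors
  have hnorm : ‖x₀ - u - x₀‖ = ‖u‖ := by rw [show x₀ - u - x₀ = -u by abel, norm_neg]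
  have hpt : (p ((x₀ - u) - x₀) : ℝ) = -(p u) := by
    rw [show x₀ - u - x₀ = -u by abel, map_neg]
  have hfx : f x₀ = ((f x₀).toReal : EReal) := (EReal.coe_toReal hfin (hfbot x₀)).symm
  set r : ℝ := (f x₀).toReal with hr
  have hnum : infConv φ f (x₀ - u) - infConv φ f x₀ - ((p ((x₀ - u) - x₀) : ℝ) : EReal)
      ≤ φ u - φ 0 - (((-p) (u - 0) : ℝ) : EReal) := by
    rw [hS, hfx, hpt, hφ0]
    simp only [sub_zero, ContinuousLinearMap.neg_apply, EReal.coe_neg]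
    refine EReal.sub_le_sub ?_ le_rfl
    have h1 : infConv φ f (x₀ - u) - (r : EReal) ≤ (φ u + (r : EReal)) - (r : EReal) := by
      refine EReal.sub_le_sub ?_ le_rfl
      rw [hfx] at key; exact key
    calc infConv φ f (x₀ - u) - (r : EReal) ≤ (φ u + (r:EReal)) - (r : EReal) := h1
      _ = φ u := EReal.add_sub_cancel_right
  have hc : (0 : EReal) ≤ ((‖u‖⁻¹ : ℝ) : EReal) := by
    exact_mod_cast inv_nonneg.2 (norm_nonneg u)
  calc (infConv φ f (x₀ - u) - infConv φ f x₀ - ((p ((x₀ - u) - x₀) : ℝ) : EReal)) *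
        ((‖(x₀ - u) - x₀‖⁻¹ : ℝ) : EReal)
      ≤ (φ u - φ 0 - (((-p) (u - 0) : ℝ) : EReal)) * ((‖(x₀ - u) - x₀‖⁻¹ : ℝ) : EReal) :=
        mul_le_mul_of_nonneg_right hnum (by rw [hnorm]; exact hc)
    _ = (φ u - φ 0 - (((-p) (u - 0) : ℝ) : EReal)) * ((‖u - 0‖⁻¹ : ℝ) : EReal) := by
        rw [hnorm, sub_zero]
end
end

section
/- Let X be a normed space, φ, f: X → (-∞,∞] with φ(0)=0, T(x) = inf{φ(y−x)+f(y) : y ∈ X}, and let x̄ satisfy T(x̄) = f(x̄) finite. Then for every ε ≥ 0, ∂̂_ε T(x̄) ⊂ ∂̂_ε f(x̄) ∩ [−∂̂_ε φ(0)]. -/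
noncomputable section
open Filter Topology

variable {X : Type*} [NormedAddCommGroup X] [NormedSpace ℝ X]

theorem stmt3 (φ f : X → EReal) (hφbot : ∀ x, φ x ≠ ⊥) (hfbot : ∀ x, f x ≠ ⊥)
    (hφ0 : φ 0 = 0) (x₀ : X) (hS : infConv φ f x₀ = f x₀) (hfin : f x₀ ≠ ⊤) :
    ∀ ε : ℝ, 0 ≤ ε →
      eFrechetSub ε (infConv φ f) x₀ ⊆
        eFrechetSub ε f x₀ ∩ {p | -p ∈ eFrechetSub ε φ 0} := by
  intro ε hε p hp
  have hTle : ∀ x, infConv φ f x ≤ f x := by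
    intro x
    have := iInf_le (fun y => φ (y - x) + f y) x
    simpa [infConv, sub_self, hφ0] using this
  have hTφ : ∀ u : X, infConv φ f (x₀ - u) ≤ φ u + f x₀ := by
    intro u
    have := iInf_le (fun y => φ (y - (x₀ - u)) + f y) x₀
    simpa [infConv, sub_sub_cancel] using this
  have hnormnn : ∀ x y : X, (0 : EReal) ≤ ((‖x - y‖⁻¹ : ℝ) : EReal) := by
    intro x y
    exact_mod_cast inv_nonneg.2 (norm_nonneg _)
  simp only [eFrechetSub, Set.mem_setOf_eq] at hp
  constructor
  · -- p ∈ eFrechetSub ε f x₀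
    simp only [eFrechetSub, Set.mem_setOf_eq]
    refine le_trans hp (liminf_le_liminf (Eventually.of_forall fun x => ?_))
    refine mul_le_mul_of_nonneg_right ?_ (hnormnn x x₀)
    rw [hS]
    exact EReal.sub_le_sub (EReal.sub_le_sub (hTle x) le_rfl) le_rfl
  · -- -p ∈ eFrechetSub ε φ 0
    simp only [eFrechetSub, Set.mem_setOf_eq]
    set G : X → EReal := fun x =>
      (infConv φ f x - infConv φ f x₀ - ((p (x - x₀) : ℝ) : EReal)) *
        ((‖x - x₀‖⁻¹ : ℝ) : EReal) with hG
    have hmap : Filter.map (fun u : X => x₀ - u) (𝓝[≠] (0 : X)) = 𝓝[≠] x₀ := by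
      have h := (Homeomorph.subLeft x₀).map_punctured_nhds_eq 0
      rw [show (fun u : X => x₀ - u) = ⇑(Homeomorph.subLeft x₀) from rfl]
      rw [h, Homeomorph.subLeft_apply, sub_zero]
    have hlim : liminf G (𝓝[≠] x₀) = liminf (fun u => G (x₀ - u)) (𝓝[≠] (0 : X)) := by
      rw [← hmap]
      simp only [liminf, Filter.map_map]
      rfl
    have hpt : ∀ u : X, G (x₀ - u) ≤
        (φ u - φ 0 - (((-p) (u - 0) : ℝ) : EReal)) * ((‖u - 0‖⁻¹ : ℝ) : EReal) := by
      intro u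
      have h1 : (x₀ - u) - x₀ = -u := by abel
      rw [hG]
      simp only [h1, hS, hφ0, sub_zero, norm_neg, map_neg,
        ContinuousLinearMap.neg_apply]
      refine mul_le_mul_of_nonneg_right ?_
        (by exact_mod_cast inv_nonneg.2 (norm_nonneg u) : (0 : EReal) ≤ ((‖u‖⁻¹ : ℝ) : EReal))
      exact EReal.sub_le_sub (EReal.sub_le_of_le_add (hTφ u)) le_rfl
    calc (-(ε : EReal)) ≤ liminf G (𝓝[≠] x₀) := hp
      _ = liminf (fun u => G (x₀ - u)) (𝓝[≠] (0 : X)) := hlim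
      _ ≤ _ := liminf_le_liminf (Eventually.of_forall hpt)
end
end

section
/- Let X be a normed space, g: X → (-∞,∞] a convex function, x̄ ∈ dom g, and ε ≥ 0. Then x* belongs to the ε-Fréchet subdifferential of g at x̄ if and only if ⟨x*, x − x̄⟩ ≤ g(x) − g(x̄) + ε‖x − x̄‖ for all x ∈ X. -/
noncomputable section
open Filter Topology

variable {X : Type*} [NormedAddCommGroup X] [NormedSpace ℝ X]

theorem stmt4 (g : X → EReal) (hgbot : ∀ x, g x ≠ ⊥) (hgconv : ERealConvexOn g)
    (x₀ : X) (hdom : g x₀ ≠ ⊤) (ε : ℝ) (hε : 0 ≤ ε) (p : X →L[ℝ] ℝ) :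
    p ∈ eFrechetSub ε g x₀ ↔
      ∀ x : X, ((p (x - x₀) : ℝ) : EReal) ≤ g x - g x₀ + ((ε * ‖x - x₀‖ : ℝ) : EReal) := by
  obtain ⟨a, ha⟩ : ∃ a : ℝ, g x₀ = (a : EReal) := ⟨(g x₀).toReal, ((g x₀).coe_toReal hdom (hgbot x₀)).symm⟩
  set u : X → EReal := fun x =>
      (g x - g x₀ - ((p (x - x₀) : ℝ) : EReal)) * ((‖x - x₀‖⁻¹ : ℝ) : EReal) with hu
  constructor
  · intro hp x
    by_cases hxx : x = x₀
    · subst hxx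
      simp [ha, map_zero, ← EReal.coe_sub, ← EReal.coe_add]
    by_cases htop : g x = ⊤
    · rw [htop, ha, EReal.top_sub_coe, EReal.top_add_coe]
      exact le_top
    obtain ⟨b, hb⟩ : ∃ b : ℝ, g x = (b : EReal) := ⟨(g x).toReal, ((g x).coe_toReal htop (hgbot x)).symm⟩
    -- approach along the segment
    have hnorm : (0:ℝ) < ‖x - x₀‖ := by
      simpa [norm_pos_iff, sub_eq_zero] using hxx
    set c : ℝ := (b - a - p (x - x₀)) / ‖x - x₀‖ with hc
    set h : ℝ → X := fun t => t • x + (1 - t) • x₀ with hh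
    have hmem : ∀ t ∈ Set.Ioo (0:ℝ) 1, u (h t) ≤ (c : EReal) := by
      intro t ht
      have ht0 := ht.1
      have ht1 := ht.2
      have hconv := hgconv x x₀ t ht0.le ht1.le
      rw [ha, hb] at hconv
      have hconv' : g (h t) ≤ ((t * b + (1 - t) * a : ℝ) : EReal) := by
        rw [hh]
        push_cast
        convert hconv using 2 <;> norm_cast
      obtain ⟨d, hd⟩ : ∃ d : ℝ, g (h t) = (d : EReal) :=
        ⟨(g (h t)).toReal, ((g (h t)).coe_toReal
          (fun htt => by rw [htt] at hconv'; exact (EReal.coe_lt_top _).not_ge hconv') (hgbot _)).symm⟩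
      rw [hd] at hconv'
      have hdle : d ≤ t * b + (1 - t) * a := by exact_mod_cast hconv'
      have hsub : h t - x₀ = t • (x - x₀) := by
        rw [hh]; module
      have hnormt : ‖h t - x₀‖ = t * ‖x - x₀‖ := by
        rw [hsub, norm_smul, Real.norm_eq_abs, abs_of_pos ht0]
      have hpt : p (h t - x₀) = t * p (x - x₀) := by
        rw [hsub, map_smul]; simp
      rw [hu]
      simp only
      rw [hd, ha, hpt, hnormt, ← EReal.coe_sub, ← EReal.coe_sub, ← EReal.coe_mul,
        EReal.coe_le_coe_iff]
      rw [hc]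
      rw [div_eq_mul_inv, mul_inv, ← mul_assoc]
      have key : (d - a - t * p (x - x₀)) * t⁻¹ ≤ (b - a - p (x - x₀)) := by
        rw [sub_mul, sub_mul, mul_comm t]
        rw [mul_inv_cancel_right₀ (ne_of_gt ht0)]
        have h1 : (d - a) * t⁻¹ ≤ b - a := by
          have h2 : d - a ≤ t * (b - a) := by nlinarith
          have h3 := mul_le_mul_of_nonneg_right h2 (le_of_lt (inv_pos.mpr ht0))
          rwa [mul_comm t (b - a), mul_assoc, mul_inv_cancel₀ (ne_of_gt ht0), mul_one] at h3
        linarith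
      exact mul_le_mul_of_nonneg_right key (by positivity)
    -- the curve tends to x₀ within ≠ x₀
    have htend : Tendsto h (𝓝[>] (0:ℝ) ⊓ 𝓟 (Set.Iio 1)) (𝓝[≠] x₀) := by
      have hT : Tendsto h (𝓝 (0:ℝ)) (𝓝 x₀) := by
        have : Continuous h := by continuity
        have := this.tendsto 0
        simpa [hh] using this
      apply tendsto_nhdsWithin_iff.mpr
      constructor
      · exact hT.mono_left (le_trans inf_le_left nhdsWithin_le_nhds)
      · filter_upwards [inter_mem_inf self_mem_nhdsWithin (mem_principal_self _)]
          with t ht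
        have ht0 : (0:ℝ) < t := ht.1
        simp only [Set.mem_compl_iff, Set.mem_singleton_iff, hh]
        intro hcontra
        apply hxx
        have : t • x + (1 - t) • x₀ - x₀ = t • (x - x₀) := by module
        have h0 : t • (x - x₀) = 0 := by
          rw [← this, hcontra]; abel
        have := smul_eq_zero.mp h0
        rcases this with h | h
        · exact absurd h (ne_of_gt ht0)
        · exact (sub_eq_zero.mp h).symm ▸ rfl
    have hNeBot : (𝓝[>] (0:ℝ) ⊓ 𝓟 (Set.Iio 1)).NeBot := by
      rw [← nhdsWithin_inter']
      apply IsGLB.nhdsWithin_neBot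
      · exact isGLB_Ioo one_pos
      · exact Set.nonempty_Ioo.mpr one_pos
    -- liminf comparison
    have h1 : (-(ε:EReal)) ≤ liminf (u ∘ h) (𝓝[>] (0:ℝ) ⊓ 𝓟 (Set.Iio 1)) := by
      refine le_trans hp ?_
      have hmapmono : map h (𝓝[>] (0:ℝ) ⊓ 𝓟 (Set.Iio 1)) ≤ 𝓝[≠] x₀ := htend
      have : liminf u (𝓝[≠] x₀) ≤ liminf u (map h (𝓝[>] (0:ℝ) ⊓ 𝓟 (Set.Iio 1))) :=
        liminf_le_liminf_of_le hmapmono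
      refine le_trans this (le_of_eq ?_)
      rw [liminf, liminf, map_map]
    have h2 : liminf (u ∘ h) (𝓝[>] (0:ℝ) ⊓ 𝓟 (Set.Iio 1)) ≤ (c : EReal) := by
      refine liminf_le_of_le (by isBoundedDefault) ?_
      intro b' hb'
      have hev : ∀ᶠ t in (𝓝[>] (0:ℝ) ⊓ 𝓟 (Set.Iio 1)), (u ∘ h) t ≤ (c : EReal) := by
        filter_upwards [inter_mem_inf self_mem_nhdsWithin (mem_principal_self _)] with t ht
        exact hmem t ⟨ht.1, ht.2⟩
      obtain ⟨t, h1t, h2t⟩ := (hb'.and hev).exists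
      exact le_trans h1t h2t
    have hfin : (-(ε:ℝ) : EReal) ≤ (c : EReal) := le_trans h1 h2
    rw [show (-(ε:ℝ) : EReal) = ((-ε : ℝ) : EReal) by norm_cast, EReal.coe_le_coe_iff] at hfin
    rw [hc, le_div_iff₀ hnorm] at hfin
    rw [hb, ha, ← EReal.coe_sub, ← EReal.coe_add, EReal.coe_le_coe_iff]
    nlinarith
  · intro H
    rw [eFrechetSub, Set.mem_setOf_eq]
    refine le_liminf_of_le (by isBoundedDefault) ?_
    filter_upwards [self_mem_nhdsWithin] with x hx
    have hxx : x ≠ x₀ := hx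
    have hnorm : (0:ℝ) < ‖x - x₀‖ := by
      simpa [norm_pos_iff, sub_eq_zero] using hxx
    by_cases htop : g x = ⊤
    · rw [htop, ha]
      rw [show (⊤ : EReal) - (a:EReal) = ⊤ from rfl]
      rw [show (⊤ : EReal) - ((p (x - x₀) : ℝ) : EReal) = ⊤ from rfl]
      calc (-(ε:ℝ) : EReal) ≤ 0 := by
            rw [show (0:EReal) = ((0:ℝ):EReal) by norm_cast]
            rw [show (-(ε:ℝ):EReal) = ((-ε:ℝ):EReal) by norm_cast, EReal.coe_le_coe_iff]
            linarith
        _ ≤ ⊤ * ((‖x - x₀‖⁻¹ : ℝ) : EReal) := by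
            rw [EReal.top_mul_coe_of_pos (by positivity)]
            exact le_top
    obtain ⟨b, hb⟩ : ∃ b : ℝ, g x = (b : EReal) := ⟨(g x).toReal, ((g x).coe_toReal htop (hgbot x)).symm⟩
    have := H x
    rw [hb, ha, ← EReal.coe_sub, ← EReal.coe_add, EReal.coe_le_coe_iff] at this
    rw [hb, ha, ← EReal.coe_sub, ← EReal.coe_sub, ← EReal.coe_mul]
    rw [show (-(ε:ℝ):EReal) = ((-ε:ℝ):EReal) by norm_cast, EReal.coe_le_coe_iff]
    have key := mul_le_mul_of_nonneg_right (show -ε * ‖x - x₀‖ ≤ b - a - p (x - x₀) by linarith)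
      (le_of_lt (inv_pos.mpr hnorm))
    rwa [mul_assoc, mul_inv_cancel₀ (ne_of_gt hnorm), mul_one] at key
end
end

section
/- Let X be a normed space, φ: X → (-∞,∞] with φ(0) = 0 coercive with constant m > 0 (i.e., m‖x‖ ≤ φ(x) for all x), and f: X → (-∞,∞] satisfying the center-Lipschitz condition |f(x) − f(x̄)| ≤ ℓ‖x − x̄‖ for all x ∈ dom f, where 0 ≤ ℓ < m. Let T(x) = inf{φ(y−x)+f(y) : y ∈ X} and suppose x̄ ∈ dom T with T(x̄) = f(x̄). If ε ≥ 0 and x* ∈ ∂̂_ε f(x̄) ∩ [−∂̂_ε φ(0)], then x* ∈ ∂̂_{αε} T(x̄), where α := 2(‖x*‖ + m)(m − ℓ)^{-1} + 1. -/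
noncomputable section
open Filter Topology

variable {X : Type*} [NormedAddCommGroup X] [NormedSpace ℝ X]

private lemma aux_ev (g : X → EReal) (z : X) (ε ε' : ℝ) (hε' : ε < ε') (p : X →L[ℝ] ℝ)
    (hp : p ∈ eFrechetSub ε g z) :
    ∃ δ > 0, ∀ x, x ≠ z → ‖x - z‖ < δ →
      (-(ε' : EReal)) < (g x - g z - ((p (x - z) : ℝ) : EReal)) * ((‖x - z‖⁻¹ : ℝ) : EReal) := by
  have hp' : (-(ε : EReal)) ≤ liminf (fun x =>
      (g x - g z - ((p (x - z) : ℝ) : EReal)) * ((‖x - z‖⁻¹ : ℝ) : EReal)) (𝓝[≠] z) := hp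
  have h := Filter.eventually_lt_of_lt_liminf
    (lt_of_lt_of_le (show -(ε' : EReal) < -(ε : EReal) by exact_mod_cast neg_lt_neg hε') hp')
  rw [Filter.Eventually, Metric.mem_nhdsWithin_iff] at h
  obtain ⟨δ, hδ, h⟩ := h
  exact ⟨δ, hδ, fun x hx hx' => h ⟨by rwa [Metric.mem_ball, dist_eq_norm], hx⟩⟩

theorem stmt9 (φ f : X → EReal) (hφbot : ∀ x, φ x ≠ ⊥) (hfbot : ∀ x, f x ≠ ⊥)
    (hφ0 : φ 0 = 0) (m : ℝ) (hm : 0 < m)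
    (hcoer : ∀ x : X, ((m * ‖x‖ : ℝ) : EReal) ≤ φ x)
    (x₀ : X) (ℓ : ℝ) (hℓ0 : 0 ≤ ℓ) (hℓm : ℓ < m)
    (hlip : ∀ x : X, f x ≠ ⊤ → |(f x).toReal - (f x₀).toReal| ≤ ℓ * ‖x - x₀‖)
    (hdom : infConv φ f x₀ ≠ ⊤) (hS : infConv φ f x₀ = f x₀)
    (ε : ℝ) (hε : 0 ≤ ε) (p : X →L[ℝ] ℝ)
    (hp : p ∈ eFrechetSub ε f x₀ ∧ -p ∈ eFrechetSub ε φ 0) :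
    p ∈ eFrechetSub ((2 * (‖p‖ + m) * (m - ℓ)⁻¹ + 1) * ε) (infConv φ f) x₀ := by
  obtain ⟨hp1, hp2⟩ := hp
  have hmℓ : 0 < m - ℓ := by linarith
  set R : ℝ := (‖p‖ + m) * (m - ℓ)⁻¹ with hRdef
  have hpm : (0:ℝ) < ‖p‖ + m := by have := norm_nonneg p; linarith
  clear_value R
  have hRpos : 0 < R := by rw [hRdef]; exact mul_pos hpm (inv_pos.2 hmℓ)
  have hRid : (m - ℓ) * R = ‖p‖ + m := by
    rw [hRdef]; field_simp
  have hα : (2 * (‖p‖ + m) * (m - ℓ)⁻¹ + 1) = 2 * R + 1 := by rw [hRdef]; ring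
  have hαpos : (0:ℝ) < 2 * R + 1 := by linarith
  -- finiteness of f x₀
  have hfx₀top : f x₀ ≠ ⊤ := by rw [← hS]; exact hdom
  set r₀ : ℝ := (f x₀).toReal with hr₀
  clear_value r₀
  have hfx₀ : f x₀ = (r₀ : EReal) := by rw [hr₀]; exact (EReal.coe_toReal hfx₀top (hfbot x₀)).symm
  -- reduce to strict ε'
  show (-(((2 * (‖p‖ + m) * (m - ℓ)⁻¹ + 1) * ε : ℝ) : EReal)) ≤ liminf (fun x =>
      (infConv φ f x - infConv φ f x₀ - ((p (x - x₀) : ℝ) : EReal)) * ((‖x - x₀‖⁻¹ : ℝ) : EReal))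
      (𝓝[≠] x₀)
  set L := liminf (fun x =>
      (infConv φ f x - infConv φ f x₀ - ((p (x - x₀) : ℝ) : EReal)) * ((‖x - x₀‖⁻¹ : ℝ) : EReal))
      (𝓝[≠] x₀) with hL
  rw [hα]
  suffices key : ∀ ε' : ℝ, ε < ε' → (-(((2 * R + 1) * ε' : ℝ) : EReal)) ≤ L by
    by_contra hcon
    push_neg at hcon
    obtain ⟨c, hc1, hc2⟩ := EReal.lt_iff_exists_real_btwn.1 hcon
    have hcr : c < -((2 * R + 1) * ε) := by
      have : (c : EReal) < ((-((2 * R + 1) * ε) : ℝ) : EReal) := by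
        rw [EReal.coe_neg]; exact hc2
      exact_mod_cast this
    set ε' : ℝ := ε + (-c - (2 * R + 1) * ε) / (2 * (2 * R + 1)) with hε'def
    have hεε' : ε < ε' := by
      rw [hε'def]
      have : 0 < (-c - (2 * R + 1) * ε) / (2 * (2 * R + 1)) := by
        apply div_pos (by linarith) (by linarith)
      linarith
    have hk := key ε' hεε'
    have hcε' : c < -((2 * R + 1) * ε') := by
      rw [hε'def]
      have h2 : (2 * R + 1) * ((-c - (2 * R + 1) * ε) / (2 * (2 * R + 1)))
          = (-c - (2 * R + 1) * ε) / 2 := by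
        field_simp
      rw [mul_add, h2]
      linarith
    have : (c : EReal) < (((-((2 * R + 1) * ε')) : ℝ) : EReal) := EReal.coe_lt_coe_iff.2 hcε'
    rw [EReal.coe_neg] at this
    exact absurd (lt_of_lt_of_le this hk) (not_lt.2 hc1.le)
  intro ε' hεε'
  have hε'0 : 0 < ε' := lt_of_le_of_lt hε hεε'
  obtain ⟨δ₁, hδ₁, H1⟩ := aux_ev f x₀ ε ε' hεε' p hp1
  obtain ⟨δ₂, hδ₂, H2⟩ := aux_ev φ 0 ε ε' hεε' (-p) hp2
  -- real version of H1
  have key1 : ∀ y, ‖y - x₀‖ < δ₁ → f y ≠ ⊤ →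
      -(ε' * ‖y - x₀‖) ≤ (f y).toReal - r₀ - p (y - x₀) := by
    intro y hy hytop
    by_cases hyx : y = x₀
    · subst hyx; simp [← hr₀]
    · have h := H1 y hyx hy
      have hn : 0 < ‖y - x₀‖ := by
        rw [norm_pos_iff]; exact sub_ne_zero.2 hyx
      set b : ℝ := (f y).toReal with hb
      have hfy : f y = (b : EReal) := (EReal.coe_toReal hytop (hfbot y)).symm
      rw [hfy, hfx₀, show ((b : EReal) - (r₀ : EReal) - ((p (y - x₀) : ℝ) : EReal))
            = ((b - r₀ - p (y - x₀) : ℝ) : EReal) by norm_cast,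
          ← EReal.coe_mul] at h
      have h' : -ε' < (b - r₀ - p (y - x₀)) * ‖y - x₀‖⁻¹ := by
        have := h
        rw [show (-(ε' : EReal)) = ((-ε' : ℝ) : EReal) by norm_cast] at this
        exact_mod_cast this
      rw [← div_eq_mul_inv] at h'
      have := (lt_div_iff₀ hn).1 h'
      nlinarith
  -- real version of H2
  have key2 : ∀ u : X, ‖u‖ < δ₂ → φ u ≠ ⊤ →
      -(ε' * ‖u‖) ≤ (φ u).toReal + p u := by
    intro u hu hutop
    by_cases h0 : u = 0
    · subst h0; simp [hφ0]
    · have h := H2 u h0 (by simpa using hu)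
      have hn : 0 < ‖u‖ := norm_pos_iff.2 h0
      set a : ℝ := (φ u).toReal with ha
      have hφu : φ u = (a : EReal) := (EReal.coe_toReal hutop (hφbot u)).symm
      rw [sub_zero, hφ0, hφu, ContinuousLinearMap.neg_apply] at h
      rw [show ((a : EReal) - (0 : EReal) - ((-(p u) : ℝ) : EReal))
            = ((a + p u : ℝ) : EReal) by norm_cast; ring,
          ← EReal.coe_mul] at h
      have h' : -ε' < (a + p u) * ‖u‖⁻¹ := by
        rw [show (-(ε' : EReal)) = ((-ε' : ℝ) : EReal) by norm_cast] at h
        exact_mod_cast h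
      rw [← div_eq_mul_inv] at h'
      have := (lt_div_iff₀ hn).1 h'
      nlinarith
  -- eventual bound
  set δ : ℝ := min δ₁ δ₂ / (R + 1) with hδdef
  clear_value δ
  have hR1 : (0:ℝ) < R + 1 := by linarith
  have hδpos : 0 < δ := by rw [hδdef]; exact div_pos (lt_min hδ₁ hδ₂) hR1
  rw [hL]
  refine Filter.le_liminf_of_le (by isBoundedDefault) ?_
  rw [Filter.Eventually, Metric.mem_nhdsWithin_iff]
  refine ⟨δ, hδpos, ?_⟩
  rintro x ⟨hxball, hxne⟩
  have hxne' : x ≠ x₀ := hxne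
  set t : ℝ := ‖x - x₀‖ with htdef
  clear_value t
  have ht : 0 < t := by rw [htdef, norm_pos_iff]; exact sub_ne_zero.2 hxne'
  have htδ : t < δ := by rw [htdef, ← dist_eq_norm]; exact Metric.mem_ball.1 hxball
  -- main per-y estimate
  have hmain : ∀ y : X,
      ((r₀ + p (x - x₀) - (2 * R + 1) * ε' * t : ℝ) : EReal) ≤ φ (y - x) + f y := by
    intro y
    by_cases hφt : φ (y - x) = ⊤
    · rw [hφt, EReal.top_add_of_ne_bot (hfbot y)]; exact le_top
    by_cases hft : f y = ⊤
    · rw [hft, EReal.add_top_of_ne_bot (hφbot _)]; exact le_top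
    set a : ℝ := (φ (y - x)).toReal with hadef
    set b : ℝ := (f y).toReal with hbdef
    clear_value a b
    have hφy : φ (y - x) = (a : EReal) := by rw [hadef]; exact (EReal.coe_toReal hφt (hφbot _)).symm
    have hfy : f y = (b : EReal) := by rw [hbdef]; exact (EReal.coe_toReal hft (hfbot y)).symm
    rw [hφy, hfy, ← EReal.coe_add, EReal.coe_le_coe_iff]
    have ha : m * ‖y - x‖ ≤ a := by
      have := hcoer (y - x); rw [hφy] at this; exact_mod_cast this
    have hb' := abs_le.1 (hlip y hft)
    rw [← hbdef] at hb'
    have htri : ‖y - x₀‖ ≤ ‖y - x‖ + t := by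
      have := dist_triangle y x x₀
      simp only [dist_eq_norm] at this
      rw [htdef]; linarith
    have hn1 : ‖y - x‖ ≤ ‖y - x₀‖ + t := by
      have := dist_triangle y x₀ x
      simp only [dist_eq_norm] at this
      rw [show ‖x₀ - x‖ = ‖x - x₀‖ from norm_sub_rev _ _] at this
      rw [htdef]; linarith
    by_cases hcase : R * t < ‖y - x₀‖
    · -- far-away y : coercivity beats Lipschitz
      have hpx : p (x - x₀) ≤ ‖p‖ * t := by
        calc p (x - x₀) ≤ |p (x - x₀)| := le_abs_self _
        _ ≤ ‖p‖ * ‖x - x₀‖ := p.le_opNorm _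
        _ = ‖p‖ * t := by rw [htdef]
      have hεt : 0 ≤ (2 * R + 1) * ε' * t :=
        mul_nonneg (mul_nonneg (by linarith) hε'0.le) ht.le
      have h4 : m * (‖y - x₀‖ - t) ≤ m * ‖y - x‖ :=
        mul_le_mul_of_nonneg_left (by linarith) hm.le
      have h5 : (m - ℓ) * (R * t) ≤ (m - ℓ) * ‖y - x₀‖ :=
        mul_le_mul_of_nonneg_left hcase.le hmℓ.le
      have h6 : (m - ℓ) * (R * t) = (‖p‖ + m) * t := by rw [← mul_assoc, hRid]
      linarith [hb'.1]
    · push_neg at hcase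
      have hmind : (R + 1) * δ = min δ₁ δ₂ := by
        rw [hδdef]; field_simp
      have hRtδ : R * t ≤ R * δ := mul_le_mul_of_nonneg_left htδ.le hRpos.le
      have hR1tδ : (R + 1) * t < (R + 1) * δ :=
        mul_lt_mul_of_pos_left htδ (by linarith)
      have hy1 : ‖y - x₀‖ < δ₁ := by
        have hmin := min_le_left δ₁ δ₂
        rw [← hmind] at hmin
        linarith
      have hy2 : ‖y - x‖ < δ₂ := by
        have hmin := min_le_right δ₁ δ₂
        rw [← hmind] at hmin
        linarith
      have k1 := key1 y hy1 hft
      have k2 := key2 (y - x) hy2 hφt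
      rw [← hbdef] at k1
      rw [← hadef] at k2
      have hpsub : p (y - x₀) - p (y - x) = p (x - x₀) := by
        rw [← map_sub]; congr 1; abel
      have hsum : ‖y - x‖ + ‖y - x₀‖ ≤ (2 * R + 1) * t := by linarith
      linarith [mul_le_mul_of_nonneg_left hsum (le_of_lt hε'0)]
  have hT : ((r₀ + p (x - x₀) - (2 * R + 1) * ε' * t : ℝ) : EReal) ≤ infConv φ f x := by
    have : infConv φ f x = ⨅ y, (φ (y - x) + f y) := rfl
    rw [this]; exact le_iInf hmain
  -- assemble
  have h1 : ((-((2 * R + 1) * ε' * t) : ℝ) : EReal)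
      ≤ infConv φ f x - infConv φ f x₀ - ((p (x - x₀) : ℝ) : EReal) := by
    rw [hS, hfx₀]
    have h2 := EReal.sub_le_sub (EReal.sub_le_sub hT (le_refl ((r₀ : ℝ) : EReal)))
      (le_refl ((p (x - x₀) : ℝ) : EReal))
    calc ((-((2 * R + 1) * ε' * t) : ℝ) : EReal)
        = ((r₀ + p (x - x₀) - (2 * R + 1) * ε' * t - r₀ - p (x - x₀) : ℝ) : EReal) := by
          norm_cast; ring
      _ = ((r₀ + p (x - x₀) - (2 * R + 1) * ε' * t : ℝ) : EReal) - (r₀ : EReal)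
            - ((p (x - x₀) : ℝ) : EReal) := by norm_cast
      _ ≤ _ := h2
  have h2 := mul_le_mul_of_nonneg_right h1
    (show (0 : EReal) ≤ ((‖x - x₀‖⁻¹ : ℝ) : EReal) by
      exact_mod_cast inv_nonneg.2 (norm_nonneg _))
  have hkey : -((2 * R + 1) * ε' * t) * ‖x - x₀‖⁻¹ = -((2 * R + 1) * ε') := by
    rw [← htdef]
    field_simp
  calc (-(((2 * R + 1) * ε' : ℝ) : EReal))
      = ((-((2 * R + 1) * ε' * t) : ℝ) : EReal) * ((‖x - x₀‖⁻¹ : ℝ) : EReal) := by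
        rw [← EReal.coe_mul, hkey]
        norm_cast
    _ ≤ _ := h2
end
end

section
/- Let X be a normed space, φ: X → (-∞,∞] with φ(0) = 0 coercive with constant m > 0, and f: X → (-∞,∞] center-Lipschitz on dom f at x̄ with constant ℓ, 0 ≤ ℓ < m. Let T(x) = inf{φ(y−x)+f(y) : y ∈ X} and suppose x̄ ∈ dom T with T(x̄) = f(x̄). Then the Fréchet subdifferential of T at x̄ satisfies ∂̂T(x̄) = ∂̂f(x̄) ∩ [−∂̂φ(0)]. -/
noncomputable section
open Filter Topology

variable {X : Type*} [NormedAddCommGroup X] [NormedSpace ℝ X]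

lemma mysubsub (A : EReal) (c d : ℝ) : A - (c : EReal) - (d : EReal) = A - ((c + d : ℝ) : EReal) := by
  induction A using EReal.rec with
  | bot => simp [sub_eq_add_neg, ← EReal.coe_neg]
  | coe a => norm_cast; ring
  | top =>
    rw [sub_eq_add_neg, sub_eq_add_neg, sub_eq_add_neg, ← EReal.coe_neg, ← EReal.coe_neg, ← EReal.coe_neg,
      EReal.top_add_coe, EReal.top_add_coe, EReal.top_add_coe]

lemma mycoe_le_sub (A : EReal) (c d : ℝ) : ((d : ℝ) : EReal) ≤ A - (c : EReal) ↔ ((d + c : ℝ) : EReal) ≤ A := by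
  induction A using EReal.rec with
  | bot => simp [sub_eq_add_neg, ← EReal.coe_neg]
  | coe a => norm_cast; constructor <;> intro <;> linarith
  | top => simp

lemma myaux_mul_le (A : EReal) (b r : ℝ) (hr : 0 < r) (h : ((b * r : ℝ) : EReal) ≤ A) :
    ((b : ℝ) : EReal) ≤ A * ((r⁻¹ : ℝ) : EReal) := by
  induction A using EReal.rec with
  | bot => exact absurd (le_bot_iff.1 h) (EReal.coe_ne_bot _)
  | coe a =>
    rw [← EReal.coe_mul, EReal.coe_le_coe_iff] at *
    rw [← le_div_iff₀ hr] at h; simpa [div_eq_mul_inv] using h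
  | top =>
    rw [EReal.top_mul_of_pos (by exact_mod_cast inv_pos.2 hr)]; exact le_top

lemma myaux_mul_lt (A : EReal) (c r : ℝ) (hr : 0 < r)
    (h : ((c : ℝ) : EReal) < A * ((r⁻¹ : ℝ) : EReal)) : ((c * r : ℝ) : EReal) < A := by
  induction A using EReal.rec with
  | bot => rw [EReal.bot_mul_of_pos (by exact_mod_cast inv_pos.2 hr)] at h; simp at h
  | coe a =>
    rw [← EReal.coe_mul, EReal.coe_lt_coe_iff] at *
    calc c * r < (a * r⁻¹) * r := by exact mul_lt_mul_of_pos_right h hr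
    _ = a := by field_simp
  | top => exact EReal.coe_lt_top _

theorem stmt10 (φ f : X → EReal) (hφbot : ∀ x, φ x ≠ ⊥) (hfbot : ∀ x, f x ≠ ⊥)
    (hφ0 : φ 0 = 0) (m : ℝ) (hm : 0 < m)
    (hcoer : ∀ x : X, ((m * ‖x‖ : ℝ) : EReal) ≤ φ x)
    (x₀ : X) (ℓ : ℝ) (hℓ0 : 0 ≤ ℓ) (hℓm : ℓ < m)
    (hlip : ∀ x : X, f x ≠ ⊤ → |(f x).toReal - (f x₀).toReal| ≤ ℓ * ‖x - x₀‖)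
    (hdom : infConv φ f x₀ ≠ ⊤) (hS : infConv φ f x₀ = f x₀) :
    eFrechetSub 0 (infConv φ f) x₀
      = eFrechetSub 0 f x₀ ∩ {p | -p ∈ eFrechetSub 0 φ 0} := by
  have hfx₀top : f x₀ ≠ ⊤ := by rw [← hS]; exact hdom
  set F₀ : ℝ := (f x₀).toReal with hF₀def
  have hfx₀ : f x₀ = (F₀ : EReal) := (EReal.coe_toReal hfx₀top (hfbot x₀)).symm
  have hTle : ∀ x, infConv φ f x ≤ f x := by
    intro x
    have h := iInf_le (fun y => φ (y - x) + f y) x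
    simpa [sub_self, hφ0, infConv] using h
  have hTley : ∀ x y, infConv φ f x ≤ φ (y - x) + f y := fun x y => iInf_le _ y
  ext p
  simp only [Set.mem_inter_iff, Set.mem_setOf_eq]
  constructor
  · intro hp
    refine ⟨?_, ?_⟩
    · simp only [eFrechetSub, Set.mem_setOf_eq] at hp ⊢
      refine hp.trans (liminf_le_liminf (Eventually.of_forall fun x => ?_))
      refine mul_le_mul_of_nonneg_right ?_ (by exact_mod_cast inv_nonneg.2 (norm_nonneg _))
      exact EReal.sub_le_sub (EReal.sub_le_sub (hTle x) hS.ge) le_rfl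
    · simp only [eFrechetSub, Set.mem_setOf_eq] at hp ⊢
      set g : X → X := fun u : X => x₀ - u with hg
      have hmap : Filter.map g (𝓝[≠] (0:X)) = 𝓝[≠] x₀ := by
        set e := (Homeomorph.neg X).trans (Homeomorph.addLeft x₀) with he
        have h1 : g = ⇑e := funext fun u => by simp [hg, he, sub_eq_add_neg]
        have himg : ⇑e '' {(0:X)}ᶜ = {x₀}ᶜ := by
          rw [← h1]
          ext y
          simp only [Set.mem_image, Set.mem_compl_iff, Set.mem_singleton_iff]
          constructor
          · rintro ⟨u, hu, rfl⟩
            simpa [hg, sub_eq_self] using hu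
          · intro hy
            exact ⟨x₀ - y, sub_ne_zero.2 (Ne.symm hy), by simp [hg]⟩
        have h0 : e 0 = x₀ := by rw [← h1]; simp [hg]
        rw [h1, e.isEmbedding.map_nhdsWithin_eq, himg, h0]
      refine le_trans hp ?_
      rw [← hmap, ← liminf_comp]
      refine liminf_le_liminf (Eventually.of_forall fun u => ?_)
      simp only [Function.comp_apply, hg]
      have h1 : x₀ - u - x₀ = -u := by abel
      rw [h1]
      have h2 : infConv φ f (x₀ - u) - infConv φ f x₀ - ((p (-u) : ℝ) : EReal)
          ≤ φ u - φ 0 - (((-p) (u - 0) : ℝ) : EReal) := by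
        have hpe : ((-p) (u - 0) : ℝ) = p (-u) := by simp
        rw [hpe]
        refine EReal.sub_le_sub ?_ le_rfl
        rw [hS, hfx₀, hφ0]
        rw [sub_eq_add_neg (φ u), neg_zero, add_zero]
        rw [EReal.sub_le_iff_le_add (Or.inl (EReal.coe_ne_bot _)) (Or.inl (EReal.coe_ne_top _))]
        have := hTley (x₀ - u) x₀
        rw [show x₀ - (x₀ - u) = u by abel, hfx₀] at this
        exact this
      calc (infConv φ f (x₀ - u) - infConv φ f x₀ - ((p (-u) : ℝ) : EReal)) * ((‖(-u : X)‖⁻¹ : ℝ) : EReal)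
          ≤ (φ u - φ 0 - (((-p) (u - 0) : ℝ) : EReal)) * ((‖(-u : X)‖⁻¹ : ℝ) : EReal) :=
            mul_le_mul_of_nonneg_right h2 (by exact_mod_cast inv_nonneg.2 (norm_nonneg _))
        _ = (φ u - φ 0 - (((-p) (u - 0) : ℝ) : EReal)) * ((‖u - 0‖⁻¹ : ℝ) : EReal) := by
            rw [norm_neg, sub_zero]
  · rintro ⟨hpf, hpφ⟩
    simp only [eFrechetSub, Set.mem_setOf_eq] at hpf hpφ ⊢
    set K : ℝ := (m + ‖p‖) / (m - ℓ) with hKdef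
    have hmℓ : (0:ℝ) < m - ℓ := by linarith
    have hK0 : 0 ≤ K := div_nonneg (by positivity) hmℓ.le
    have hK : (m - ℓ) * K = m + ‖p‖ := by rw [hKdef, mul_div_assoc']; exact mul_div_cancel_left₀ _ hmℓ.ne'
    have h2K : (0:ℝ) < 2 * K + 1 := by linarith
    have hmain : ∀ ε : ℝ, 0 < ε → (((-(ε * (2 * K + 1)) : ℝ)) : EReal) ≤
        liminf (fun x => (infConv φ f x - infConv φ f x₀ - ((p (x - x₀) : ℝ) : EReal)) *
          ((‖x - x₀‖⁻¹ : ℝ) : EReal)) (𝓝[≠] x₀) := by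
      intro ε hε
      -- extract δ₁ from hpf
      have hev1 : ∀ᶠ y in 𝓝[≠] x₀, (-(ε : ℝ) : EReal) <
          (f y - f x₀ - ((p (y - x₀) : ℝ) : EReal)) * ((‖y - x₀‖⁻¹ : ℝ) : EReal) := by
        refine eventually_lt_of_lt_liminf (lt_of_lt_of_le ?_ hpf)
        rw [EReal.coe_zero, neg_zero, ← EReal.coe_neg]
        exact_mod_cast (by linarith : (-ε : ℝ) < (0 : ℝ))
      rw [eventually_iff, Metric.mem_nhdsWithin_iff] at hev1
      obtain ⟨δ₁, hδ₁, h₁⟩ := hev1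
      have hev2 : ∀ᶠ u in 𝓝[≠] (0:X), (-(ε : ℝ) : EReal) <
          (φ u - φ 0 - (((-p) (u - 0) : ℝ) : EReal)) * ((‖u - 0‖⁻¹ : ℝ) : EReal) := by
        refine eventually_lt_of_lt_liminf (lt_of_lt_of_le ?_ hpφ)
        rw [EReal.coe_zero, neg_zero, ← EReal.coe_neg]
        exact_mod_cast (by linarith : (-ε : ℝ) < (0 : ℝ))
      rw [eventually_iff, Metric.mem_nhdsWithin_iff] at hev2
      obtain ⟨δ₂, hδ₂, h₂⟩ := hev2
      -- lower bounds for f and φ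
      have hf_lb : ∀ y, dist y x₀ < δ₁ → ((F₀ + p (y - x₀) - ε * ‖y - x₀‖ : ℝ) : EReal) ≤ f y := by
        intro y hy
        by_cases hyx : y = x₀
        · subst hyx
          simp [hfx₀]
        · have hQ := h₁ ⟨Metric.mem_ball.2 hy, hyx⟩
          simp only [Set.mem_setOf_eq] at hQ
          rw [hfx₀, mysubsub, ← EReal.coe_neg] at hQ
          have hr : 0 < ‖y - x₀‖ := by
            rw [norm_sub_pos_iff]; exact hyx
          have h3 := (mycoe_le_sub _ _ _).1 (myaux_mul_lt _ _ _ hr hQ).le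
          rw [show (-ε * ‖y - x₀‖ + (F₀ + p (y - x₀)) : ℝ) = F₀ + p (y - x₀) - ε * ‖y - x₀‖ by ring] at h3
          exact h3
      have hφ_lb : ∀ u : X, dist u 0 < δ₂ → ((-(p u) - ε * ‖u‖ : ℝ) : EReal) ≤ φ u := by
        intro u hu
        by_cases hu0 : u = 0
        · subst hu0
          simp [hφ0]
        · have hQ := h₂ ⟨Metric.mem_ball.2 hu, hu0⟩
          simp only [Set.mem_setOf_eq] at hQ
          have hpe : (((-p) (u - 0) : ℝ) : EReal) = ((-(p u) : ℝ) : EReal) := by norm_cast; simp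
          rw [hpe, hφ0, ← EReal.coe_zero, mysubsub, ← EReal.coe_neg, sub_zero] at hQ
          have hr : 0 < ‖u‖ := norm_pos_iff.2 hu0
          have h3 := (mycoe_le_sub _ _ _).1 (myaux_mul_lt _ _ _ hr hQ).le
          rw [show (-ε * ‖u‖ + (0 + -(p u)) : ℝ) = -(p u) - ε * ‖u‖ by ring] at h3
          exact h3
      -- eventual bound on the quotient of T
      refine le_liminf_of_le (by isBoundedDefault) ?_
      rw [eventually_iff, Metric.mem_nhdsWithin_iff]
      refine ⟨min (δ₁ / (K + 1)) (δ₂ / (K + 1)), by positivity, ?_⟩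
      rintro x ⟨hxball, hxne⟩
      simp only [Set.mem_setOf_eq, Set.mem_compl_iff, Set.mem_singleton_iff] at hxne
      rw [Metric.mem_ball, dist_eq_norm] at hxball
      set r : ℝ := ‖x - x₀‖ with hrdef
      have hr : 0 < r := by
        rw [hrdef, norm_sub_pos_iff]; exact hxne
      have hrδ₁ : (K + 1) * r < δ₁ := by
        have : r < δ₁ / (K + 1) := lt_of_lt_of_le hxball (min_le_left _ _)
        rw [lt_div_iff₀ (by linarith)] at this; linarith
      have hrδ₂ : (K + 1) * r < δ₂ := by
        have : r < δ₂ / (K + 1) := lt_of_lt_of_le hxball (min_le_right _ _)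
        rw [lt_div_iff₀ (by linarith)] at this; linarith
      -- the key lower bound for T x
      have hTx : ((F₀ + p (x - x₀) - ε * (2 * K + 1) * r : ℝ) : EReal) ≤ infConv φ f x := by
        refine le_iInf fun y => ?_
        by_cases hyt : f y = ⊤
        · rw [hyt, EReal.add_top_of_ne_bot (hφbot _)]; exact le_top
        · have hylip := hlip y hyt
          have hfy : f y = (((f y).toReal : ℝ) : EReal) := (EReal.coe_toReal hyt (hfbot y)).symm
          by_cases hycase : ‖y - x₀‖ ≤ K * r
          · -- close case
            have hyx : ‖y - x‖ ≤ ‖y - x₀‖ + r := by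
              calc ‖y - x‖ = ‖(y - x₀) - (x - x₀)‖ := by congr 1; abel
                _ ≤ ‖y - x₀‖ + ‖x - x₀‖ := norm_sub_le _ _
            have h1 : ((-(p (y - x)) - ε * ‖y - x‖ : ℝ) : EReal) ≤ φ (y - x) := by
              refine hφ_lb (y - x) ?_
              rw [dist_zero_right]
              calc ‖y - x‖ ≤ ‖y - x₀‖ + r := hyx
                _ ≤ K * r + r := by linarith
                _ = (K + 1) * r := by ring
                _ < δ₂ := hrδ₂
            have h2 : ((F₀ + p (y - x₀) - ε * ‖y - x₀‖ : ℝ) : EReal) ≤ f y := by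
              refine hf_lb y ?_
              rw [dist_eq_norm]
              calc ‖y - x₀‖ ≤ K * r := hycase
                _ < (K + 1) * r := by linarith
                _ < δ₁ := hrδ₁
            have hsum := add_le_add h1 h2
            rw [← EReal.coe_add] at hsum
            refine le_trans ?_ hsum
            rw [EReal.coe_le_coe_iff]
            have hplin : p (y - x₀) - p (y - x) = p (x - x₀) := by
              rw [← map_sub]; congr 1; abel
            have hb1 : ε * ‖y - x‖ ≤ ε * ((K + 1) * r) := by
              refine mul_le_mul_of_nonneg_left ?_ hε.le
              linarith
            have hb2 : ε * ‖y - x₀‖ ≤ ε * (K * r) := mul_le_mul_of_nonneg_left hycase hε.le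
            nlinarith [hb1, hb2]
          · -- far case
            push_neg at hycase
            have h1 : ((m * ‖y - x‖ : ℝ) : EReal) ≤ φ (y - x) := hcoer _
            have h2 : ((F₀ - ℓ * ‖y - x₀‖ : ℝ) : EReal) ≤ f y := by
              rw [hfy, EReal.coe_le_coe_iff]
              have := abs_le.1 hylip
              linarith [this.1]
            have hsum := add_le_add h1 h2
            rw [← EReal.coe_add] at hsum
            refine le_trans ?_ hsum
            rw [EReal.coe_le_coe_iff]
            have htri : ‖y - x₀‖ - r ≤ ‖y - x‖ := by
              have : ‖y - x₀‖ ≤ ‖y - x‖ + ‖x - x₀‖ := by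
                calc ‖y - x₀‖ = ‖(y - x) + (x - x₀)‖ := by congr 1; abel
                  _ ≤ ‖y - x‖ + ‖x - x₀‖ := norm_add_le _ _
              linarith
            have hop : p (x - x₀) ≤ ‖p‖ * r := by
              calc p (x - x₀) ≤ |p (x - x₀)| := le_abs_self _
                _ = ‖p (x - x₀)‖ := rfl
                _ ≤ ‖p‖ * ‖x - x₀‖ := p.le_opNorm _
            have e1 : m * (‖y - x₀‖ - r) ≤ m * ‖y - x‖ := mul_le_mul_of_nonneg_left htri hm.le
            have e2 : (m - ℓ) * (K * r) ≤ (m - ℓ) * ‖y - x₀‖ :=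
              mul_le_mul_of_nonneg_left hycase.le hmℓ.le
            have e4 : (m - ℓ) * (K * r) = (m + ‖p‖) * r := by rw [← mul_assoc, hK]
            have e3 : 0 ≤ ε * ((2 * K + 1) * r) := by positivity
            nlinarith [e1, e2, e4, e3, hop]
      -- conclude the quotient bound
      simp only [Set.mem_setOf_eq]
      rw [hS, hfx₀, mysubsub]
      have h5 : ((-(ε * (2 * K + 1)) * r : ℝ) : EReal) ≤ infConv φ f x - ((F₀ + p (x - x₀) : ℝ) : EReal) := by
        refine (mycoe_le_sub _ _ _).2 ?_
        rw [show (-(ε * (2 * K + 1)) * r + (F₀ + p (x - x₀)) : ℝ) = F₀ + p (x - x₀) - ε * (2 * K + 1) * r by ring]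
        exact hTx
      exact myaux_mul_le _ _ _ hr h5
    -- from hmain to the final bound
    by_contra hcon
    push_neg at hcon
    have h0 : liminf (fun x => (infConv φ f x - infConv φ f x₀ - ((p (x - x₀) : ℝ) : EReal)) *
        ((‖x - x₀‖⁻¹ : ℝ) : EReal)) (𝓝[≠] x₀) < ((0 : ℝ) : EReal) := by
      simpa using hcon
    obtain ⟨c, hc1, hc2⟩ := EReal.exists_between_coe_real h0
    rw [EReal.coe_lt_coe_iff] at hc2
    have hεpos : 0 < (-c) / (2 * K + 1) := by
      apply div_pos (by linarith) h2K
    have := hmain ((-c) / (2 * K + 1)) hεpos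
    rw [div_mul_cancel₀ _ (ne_of_gt h2K)] at this
    rw [neg_neg] at this
    exact absurd (lt_of_lt_of_le hc1 this) (lt_irrefl _)
end
end

section
/- Let X be a normed space, F a nonempty closed bounded convex subset with F ≠ {0}, and f: X → (-∞,∞] center-Lipschitz on dom f at x̄ with constant ℓ, 0 ≤ ℓ < ‖F‖^{-1}. Define the perturbed minimal time function T(x) = inf{ρ_F(y − x) + f(y) : y ∈ X}, where ρ_F is the Minkowski gauge of F, and assume x̄ ∈ dom T with T(x̄) = f(x̄). Then ∂̂T(x̄) = ∂̂f(x̄) ∩ {x* ∈ X* : sup_{u∈F} ⟨−x*, u⟩ ≤ 1}. -/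
noncomputable section
open Filter Topology

variable {X : Type*} [NormedAddCommGroup X] [NormedSpace ℝ X]

lemma gauge'_nonneg (F : Set X) (x : X) : (0 : EReal) ≤ gauge' F x :=
  le_sInf fun r hr => by obtain ⟨t, ht, _, rfl⟩ := hr; exact_mod_cast ht

lemma gauge'_ne_bot (F : Set X) (x : X) : gauge' F x ≠ ⊥ :=
  fun h => by simpa [h] using gauge'_nonneg F x

lemma gauge'_le (F : Set X) {t : ℝ} (ht : 0 ≤ t) {u : X} (hu : u ∈ F) :
    gauge' F (t • u) ≤ (t : EReal) :=
  sInf_le ⟨t, ht, ⟨u, hu, rfl⟩, rfl⟩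

lemma gauge'_zero (F : Set X) (hne : F.Nonempty) : gauge' F 0 = 0 := by
  obtain ⟨u, hu⟩ := hne
  refine le_antisymm ?_ (gauge'_nonneg F 0)
  have := gauge'_le F le_rfl hu (t := 0)
  simpa using this

lemma linear_le_gauge' (F : Set X) (p : X →L[ℝ] ℝ) (hp : ∀ u ∈ F, -p u ≤ 1) (x : X) :
    ((-p x : ℝ) : EReal) ≤ gauge' F x := by
  refine le_sInf fun r hr => ?_
  obtain ⟨t, ht, ⟨u, hu, rfl⟩, rfl⟩ := hr
  have h2 : -p (t • u) ≤ t := by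
    have h1 : t * (-p u) ≤ t * 1 := mul_le_mul_of_nonneg_left (hp u hu) ht
    simpa [mul_comm] using h1
  exact_mod_cast h2

lemma norm_le_gauge' (F : Set X) {M : ℝ} (hM : 0 < M) (hFM : ∀ u ∈ F, ‖u‖ ≤ M) (x : X) :
    ((‖x‖ / M : ℝ) : EReal) ≤ gauge' F x := by
  refine le_sInf fun r hr => ?_
  obtain ⟨t, ht, ⟨u, hu, rfl⟩, rfl⟩ := hr
  have h1 : ‖t • u‖ ≤ t * M := by
    rw [norm_smul, Real.norm_of_nonneg ht]
    exact mul_le_mul_of_nonneg_left (hFM u hu) ht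
  have : ‖t • u‖ / M ≤ t := by rw [div_le_iff₀ hM]; exact h1
  exact_mod_cast this

lemma ereal_nonneg_of_forall_neg_le {L : EReal} (h : ∀ ε : ℝ, 0 < ε → ((-ε : ℝ) : EReal) ≤ L) :
    (0 : EReal) ≤ L := by
  induction L with
  | bot => exact absurd (le_bot_iff.mp (h 1 one_pos)) (EReal.coe_ne_bot _)
  | coe l =>
    by_contra hl
    have hl' : l < 0 := by
      by_contra h0
      exact hl (EReal.coe_nonneg.2 (not_lt.1 h0))
    have := h (-l / 2) (by linarith)
    rw [EReal.coe_le_coe_iff] at this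
    linarith
  | top => exact le_top

set_option maxHeartbeats 1000000 in
theorem stmt11 (F : Set X) (hne : F.Nonempty) (hcl : IsClosed F)
    (hbd : Bornology.IsBounded F) (hconv : Convex ℝ F) (hnz : F ≠ {0})
    (f : X → EReal) (hfbot : ∀ x, f x ≠ ⊥)
    (x₀ : X) (ℓ : ℝ) (hℓ0 : 0 ≤ ℓ) (hℓm : ℓ < (sSup ((fun u => ‖u‖) '' F))⁻¹)
    (hlip : ∀ x : X, f x ≠ ⊤ → |(f x).toReal - (f x₀).toReal| ≤ ℓ * ‖x - x₀‖)
    (hdom : infConv (gauge' F) f x₀ ≠ ⊤) (hS : infConv (gauge' F) f x₀ = f x₀) :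
    eFrechetSub 0 (infConv (gauge' F) f) x₀
      = eFrechetSub 0 f x₀ ∩ {p : X →L[ℝ] ℝ | ∀ u ∈ F, -p u ≤ 1} := by
  classical
  set T : X → EReal := infConv (gauge' F) f with hTdef
  set M : ℝ := sSup ((fun u => ‖u‖) '' F) with hMdef
  obtain ⟨Cb, hCb⟩ := isBounded_iff_forall_norm_le.1 hbd
  have hbdd : BddAbove ((fun u => ‖u‖) '' F) := ⟨Cb, by rintro _ ⟨u, hu, rfl⟩; exact hCb u hu⟩
  have hMle : ∀ u ∈ F, ‖u‖ ≤ M := fun u hu => le_csSup hbdd ⟨u, hu, rfl⟩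
  have hM0 : 0 < M := by
    obtain ⟨u, hu, hu0⟩ : ∃ u ∈ F, u ≠ 0 := by
      by_contra h; push_neg at h
      exact hnz (Set.eq_singleton_iff_nonempty_unique_mem.mpr ⟨hne, h⟩)
    exact lt_of_lt_of_le (norm_pos_iff.2 hu0) (hMle u hu)
  have hℓM : ℓ * M < 1 := by
    have := mul_lt_mul_of_pos_right hℓm hM0
    rwa [inv_mul_cancel₀ hM0.ne'] at this
  have hfx0top : f x₀ ≠ ⊤ := hS ▸ hdom
  set a : ℝ := (f x₀).toReal with ha
  have hfa : f x₀ = (a : EReal) := (EReal.coe_toReal hfx0top (hfbot x₀)).symm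
  have hTa : T x₀ = (a : EReal) := hS.trans hfa
  have hlip' : ∀ x : X, ∀ b : ℝ, f x = (b : EReal) → |b - a| ≤ ℓ * ‖x - x₀‖ := by
    intro x b hb
    have := hlip x (by rw [hb]; exact EReal.coe_ne_top b)
    rwa [hb, EReal.toReal_coe] at this
  have hTle : ∀ x : X, T x ≤ f x := by
    intro x
    have := iInf_le (fun y => gauge' F (y - x) + f y) x
    rw [hTdef]
    refine le_trans this ?_
    simp [sub_self, gauge'_zero F hne]
  have hTlow : ∀ x : X, ((a - ℓ * ‖x - x₀‖ : ℝ) : EReal) ≤ T x := by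
    intro x
    refine le_iInf fun y => ?_
    rcases eq_or_ne (f y) ⊤ with hfy | hfy
    · rw [hfy, EReal.add_top_of_ne_bot (gauge'_ne_bot F _)]; exact le_top
    set b : ℝ := (f y).toReal with hbdef
    have hb : f y = (b : EReal) := (EReal.coe_toReal hfy (hfbot y)).symm
    rcases eq_or_ne (gauge' F (y - x)) ⊤ with hg | hg
    · rw [hg, hb, EReal.top_add_coe]; exact le_top
    set g : ℝ := (gauge' F (y - x)).toReal with hgdef
    have hgg : gauge' F (y - x) = (g : EReal) := (EReal.coe_toReal hg (gauge'_ne_bot F _)).symm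
    have hg1 : ‖y - x‖ ≤ g * M := by
      have h1 := norm_le_gauge' F hM0 hMle (y - x)
      rw [hgg, EReal.coe_le_coe_iff] at h1
      rwa [div_le_iff₀ hM0] at h1
    have hg0 : 0 ≤ g := by nlinarith [norm_nonneg (y - x)]
    have hb1 : |b - a| ≤ ℓ * ‖y - x₀‖ := hlip' y b hb
    rw [hgg, hb, ← EReal.coe_add, EReal.coe_le_coe_iff]
    have htri : ‖y - x₀‖ ≤ ‖y - x‖ + ‖x - x₀‖ := by
      have := dist_triangle y x x₀; simpa [dist_eq_norm] using this
    nlinarith [abs_le.mp hb1, norm_nonneg (y - x), norm_nonneg (x - x₀)]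
  ext p
  simp only [eFrechetSub, Set.mem_setOf_eq, Set.mem_inter_iff, neg_zero, EReal.coe_zero, hTa, hfa]
  constructor
  · intro hp
    refine ⟨le_trans hp (liminf_le_liminf (Eventually.of_forall fun x => ?_)), fun u hu => ?_⟩
    · exact mul_le_mul_of_nonneg_right
        (EReal.sub_le_sub (EReal.sub_le_sub (hTle x) le_rfl) le_rfl)
        (EReal.coe_nonneg.2 (inv_nonneg.2 (norm_nonneg _)))
    · by_cases hu0 : u = 0
      · simp [hu0]
      have hnu : 0 < ‖u‖ := norm_pos_iff.2 hu0
      set φ : ℝ → X := fun t => x₀ - t • u with hφ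
      have hmap : Tendsto φ (𝓝[>] (0:ℝ)) (𝓝[≠] x₀) := by
        rw [tendsto_nhdsWithin_iff]
        constructor
        · have hc : Continuous φ := continuous_const.sub (continuous_id.smul continuous_const)
          have h0 := hc.tendsto 0
          simp only [hφ, zero_smul, sub_zero] at h0
          exact h0.mono_left nhdsWithin_le_nhds
        · filter_upwards [self_mem_nhdsWithin] with t ht
          simp only [Set.mem_Ioi] at ht
          simp only [Set.mem_compl_iff, Set.mem_singleton_iff, hφ]
          intro hcon
          rcases smul_eq_zero.mp (sub_eq_self.mp hcon) with h | h
          · exact absurd h (ne_of_gt ht)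
          · exact hu0 h
      set Q : X → EReal := fun x => (T x - (a:EReal) - ((p (x - x₀) : ℝ):EReal)) * ((‖x - x₀‖⁻¹ : ℝ):EReal) with hQ
      have hQle : ∀ t ∈ Set.Ioi (0:ℝ), Q (φ t) ≤ (((1 + p u) / ‖u‖ : ℝ) : EReal) := by
        intro t ht
        have ht0 : (0:ℝ) < t := ht
        have hsub : φ t - x₀ = -(t • u) := by simp [hφ]
        have hTub : T (φ t) ≤ ((t + a : ℝ) : EReal) := by
          have h1 := iInf_le (fun y => gauge' F (y - φ t) + f y) x₀
          have h2 : x₀ - φ t = t • u := by simp [hφ]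
          rw [h2, hfa] at h1
          calc T (φ t) ≤ gauge' F (t • u) + (a:EReal) := h1
          _ ≤ (t:EReal) + (a:EReal) := add_le_add (gauge'_le F ht0.le hu) le_rfl
          _ = ((t + a : ℝ):EReal) := (EReal.coe_add t a).symm
        have hpv : p (φ t - x₀) = -(t * p u) := by rw [hsub]; simp
        have hnum : T (φ t) - (a:EReal) - ((p (φ t - x₀) : ℝ):EReal) ≤ ((t + t * p u : ℝ):EReal) := by
          rw [hpv]
          calc T (φ t) - (a:EReal) - ((-(t * p u):ℝ):EReal)
              ≤ ((t + a:ℝ):EReal) - ((a:ℝ):EReal) - ((-(t * p u):ℝ):EReal) :=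
                EReal.sub_le_sub (EReal.sub_le_sub hTub le_rfl) le_rfl
          _ = ((t + t * p u : ℝ):EReal) := by norm_cast; ring
        have hnrm : ‖φ t - x₀‖ = t * ‖u‖ := by
          rw [hsub, norm_neg, norm_smul, Real.norm_of_nonneg ht0.le]
        calc Q (φ t)
            ≤ ((t + t * p u : ℝ):EReal) * ((‖φ t - x₀‖⁻¹:ℝ):EReal) :=
              mul_le_mul_of_nonneg_right hnum (EReal.coe_nonneg.2 (by positivity))
        _ = (((t + t * p u) * (t * ‖u‖)⁻¹ : ℝ) : EReal) := by rw [hnrm, EReal.coe_mul]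
        _ = (((1 + p u) / ‖u‖ : ℝ) : EReal) := by
            congr 1
            field_simp
      have hlim1 : (0:EReal) ≤ liminf (Q ∘ φ) (𝓝[>] (0:ℝ)) := by
        refine le_trans hp ?_
        rw [liminf_comp]
        exact liminf_le_liminf_of_le hmap
      have hlim2 : liminf (Q ∘ φ) (𝓝[>] (0:ℝ)) ≤ (((1 + p u) / ‖u‖ : ℝ) : EReal) := by
        refine liminf_le_of_frequently_le ?_
        refine Eventually.frequently ?_
        filter_upwards [self_mem_nhdsWithin] with t ht
        exact hQle t ht
      have hfin : (0:ℝ) ≤ (1 + p u) / ‖u‖ := by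
        have := le_trans hlim1 hlim2
        exact_mod_cast this
      rw [le_div_iff₀ hnu] at hfin
      linarith
  · rintro ⟨hp1, hp2⟩
    refine ereal_nonneg_of_forall_neg_le fun ε hε => ?_
    refine le_liminf_of_le (by isBoundedDefault) ?_
    set κ : ℝ := M⁻¹ - ℓ with hκdef
    have hκ0 : 0 < κ := sub_pos.2 hℓm
    set C : ℝ := (M⁻¹ + ‖p‖) / κ + 1 with hCdef
    have hC1 : (1:ℝ) ≤ C := le_add_of_nonneg_left (div_nonneg (by positivity) hκ0.le)
    have hC0 : (0:ℝ) < C := lt_of_lt_of_le one_pos hC1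
    set ε' : ℝ := ε / C with hε'def
    have hε'0 : 0 < ε' := div_pos hε hC0
    have hfl : ∀ᶠ y in 𝓝[≠] x₀, ((-ε':ℝ):EReal)
        < (f y - (a:EReal) - ((p (y - x₀) : ℝ):EReal)) * ((‖y - x₀‖⁻¹:ℝ):EReal) := by
      refine eventually_lt_of_lt_liminf (lt_of_lt_of_le ?_ hp1)
      exact_mod_cast (by linarith : (-ε' : ℝ) < 0)
    rw [eventually_nhdsWithin_iff, Metric.eventually_nhds_iff] at hfl
    obtain ⟨δ, hδ0, hδ⟩ := hfl
    have hf' : ∀ y : X, ‖y - x₀‖ < δ → ((a + p (y - x₀) - ε' * ‖y - x₀‖ : ℝ):EReal) ≤ f y := by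
      intro y hy
      rcases eq_or_ne y x₀ with rfl | hyx
      · simp [hfa]
      rcases eq_or_ne (f y) ⊤ with hfy | hfy
      · rw [hfy]; exact le_top
      set b : ℝ := (f y).toReal with hbdef
      have hb : f y = (b : EReal) := (EReal.coe_toReal hfy (hfbot y)).symm
      have hr : 0 < ‖y - x₀‖ := norm_pos_iff.2 (sub_ne_zero.2 hyx)
      have h1 := hδ (by rwa [dist_eq_norm]) (by simpa using hyx)
      rw [hb] at h1
      have h1' : (-ε' : ℝ) < (b - a - p (y - x₀)) * ‖y - x₀‖⁻¹ := by
        have hcast : ((b:EReal) - (a:EReal) - ((p (y - x₀):ℝ):EReal)) * ((‖y - x₀‖⁻¹:ℝ):EReal)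
            = (((b - a - p (y - x₀)) * ‖y - x₀‖⁻¹ : ℝ):EReal) := by norm_cast
        rw [hcast] at h1
        exact_mod_cast h1
      have h2 : -ε' * ‖y - x₀‖ < b - a - p (y - x₀) := by
        have h3 := mul_lt_mul_of_pos_right h1' hr
        rwa [mul_assoc, inv_mul_cancel₀ hr.ne', mul_one] at h3
      rw [hb, EReal.coe_le_coe_iff]
      linarith
    rw [eventually_nhdsWithin_iff, Metric.eventually_nhds_iff]
    refine ⟨δ / C, div_pos hδ0 hC0, fun x hx hxne => ?_⟩
    rw [dist_eq_norm] at hx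
    have hxne' : x ≠ x₀ := by simpa using hxne
    have hx0 : 0 < ‖x - x₀‖ := norm_pos_iff.2 (sub_ne_zero.2 hxne')
    have hnum : ((a + p (x - x₀) - ε * ‖x - x₀‖ : ℝ):EReal) ≤ T x := by
      refine le_iInf fun y => ?_
      rcases eq_or_ne (f y) ⊤ with hfy | hfy
      · rw [hfy, EReal.add_top_of_ne_bot (gauge'_ne_bot F _)]; exact le_top
      set b : ℝ := (f y).toReal with hbdef
      have hb : f y = (b : EReal) := (EReal.coe_toReal hfy (hfbot y)).symm
      rcases eq_or_ne (gauge' F (y - x)) ⊤ with hg | hg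
      · rw [hg, hb, EReal.top_add_coe]; exact le_top
      set g : ℝ := (gauge' F (y - x)).toReal with hgdef
      have hgg : gauge' F (y - x) = (g : EReal) := (EReal.coe_toReal hg (gauge'_ne_bot F _)).symm
      have hgp : p (x - y) ≤ g := by
        have h1 := linear_le_gauge' F p hp2 (y - x)
        rw [hgg, EReal.coe_le_coe_iff] at h1
        have h2 : -p (y - x) = p (x - y) := by rw [← map_neg, neg_sub]
        linarith [h2 ▸ h1]
      have hgn : ‖y - x‖ ≤ g * M := by
        have h1 := norm_le_gauge' F hM0 hMle (y - x)
        rw [hgg, EReal.coe_le_coe_iff] at h1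
        rwa [div_le_iff₀ hM0] at h1
      rw [hgg, hb, ← EReal.coe_add, EReal.coe_le_coe_iff]
      by_cases hcase : ‖y - x₀‖ ≤ C * ‖x - x₀‖
      · have hyδ : ‖y - x₀‖ < δ := lt_of_le_of_lt hcase (by
          calc C * ‖x - x₀‖ < C * (δ / C) := mul_lt_mul_of_pos_left hx hC0
          _ = δ := mul_div_cancel₀ δ hC0.ne')
        have h3 := hf' y hyδ
        rw [hb, EReal.coe_le_coe_iff] at h3
        have hsplit : p (x - y) + p (y - x₀) = p (x - x₀) := by
          rw [← map_add, sub_add_sub_cancel]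
        have hεC : ε' * (C * ‖x - x₀‖) = ε * ‖x - x₀‖ := by
          rw [← mul_assoc, div_mul_cancel₀ ε hC0.ne']
        have h4 : ε' * ‖y - x₀‖ ≤ ε' * (C * ‖x - x₀‖) :=
          mul_le_mul_of_nonneg_left hcase hε'0.le
        linarith
      · push_neg at hcase
        have hblow : a - ℓ * ‖y - x₀‖ ≤ b := by
          have h5 := abs_le.mp (hlip' y b hb); linarith [h5.1]
        have htri : ‖y - x₀‖ ≤ ‖y - x‖ + ‖x - x₀‖ := by
          have := dist_triangle y x x₀; simpa [dist_eq_norm] using this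
        have hpx : p (x - x₀) ≤ ‖p‖ * ‖x - x₀‖ := by
          have h6 := p.le_opNorm (x - x₀)
          rw [Real.norm_eq_abs] at h6
          linarith [le_abs_self (p (x - x₀))]
        have hCM : C * (1 - ℓ * M) = 1 + ‖p‖ * M + (1 - ℓ * M) := by
          have hκM : κ * M = 1 - ℓ * M := by
            rw [hκdef, sub_mul, inv_mul_cancel₀ hM0.ne']
          rw [← hκM]
          rw [hCdef]
          field_simp
        have hCMh : C * ‖x - x₀‖ * (1 - ℓ * M)
            = (1 + ‖p‖ * M + (1 - ℓ * M)) * ‖x - x₀‖ := by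
          linear_combination ‖x - x₀‖ * hCM
        have h1ℓM : (0:ℝ) < 1 - ℓ * M := by linarith
        have h2 : C * ‖x - x₀‖ * (1 - ℓ * M) ≤ ‖y - x₀‖ * (1 - ℓ * M) :=
          mul_le_mul_of_nonneg_right hcase.le h1ℓM.le
        have h1 : (a - ℓ * ‖y - x₀‖) * M ≤ b * M :=
          mul_le_mul_of_nonneg_right hblow hM0.le
        have hpxM : p (x - x₀) * M ≤ ‖p‖ * ‖x - x₀‖ * M :=
          mul_le_mul_of_nonneg_right hpx hM0.le
        have pos1 : 0 < ‖x - x₀‖ * (1 - ℓ * M) := mul_pos hx0 h1ℓM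
        have pos2 : 0 < ε * ‖x - x₀‖ * M := mul_pos (mul_pos hε hx0) hM0
        have key : (a + p (x - x₀) - ε * ‖x - x₀‖) * M < (g + b) * M := by
          linarith [h1, hgn, htri, h2, hCMh, hpxM, pos1, pos2]
        exact (lt_of_mul_lt_mul_right key hM0.le).le
    have hmul : ((-(ε * ‖x - x₀‖):ℝ):EReal) ≤ T x - (a:EReal) - ((p (x - x₀):ℝ):EReal) := by
      calc ((-(ε * ‖x - x₀‖):ℝ):EReal)
          = ((a + p (x - x₀) - ε * ‖x - x₀‖ : ℝ):EReal) - ((a:ℝ):EReal) - ((p (x - x₀):ℝ):EReal) := by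
            norm_cast; ring
      _ ≤ _ := EReal.sub_le_sub (EReal.sub_le_sub hnum le_rfl) le_rfl
    calc ((-ε:ℝ):EReal) = ((-(ε * ‖x - x₀‖) * ‖x - x₀‖⁻¹ : ℝ):EReal) := by
          congr 1
          field_simp
    _ = ((-(ε * ‖x - x₀‖):ℝ):EReal) * ((‖x - x₀‖⁻¹:ℝ):EReal) := EReal.coe_mul _ _
    _ ≤ (T x - (a:EReal) - ((p (x - x₀):ℝ):EReal)) * ((‖x - x₀‖⁻¹:ℝ):EReal) :=
        mul_le_mul_of_nonneg_right hmul (EReal.coe_nonneg.2 (by positivity))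
end
end

section
/- Let X be a normed space, Ω a nonempty subset of X, J: X → (-∞,∞] satisfying |J(x) − J(x̄)| ≤ ℓ‖x − x̄‖ for all x ∈ Ω ∩ dom J with constant ℓ < 1, and define the perturbed distance function d_Ω^J(x) := inf{‖y − x‖ + J(y) : y ∈ Ω}. Suppose x̄ ∈ Ω with d_Ω^J(x̄) = J(x̄) finite. Then ∂̂d_Ω^J(x̄) = ∂̂(J + δ_Ω)(x̄) ∩ B*, where B* is the closed unit ball of X* and δ_Ω is the indicator function of Ω. -/
noncomputable section
open Filter Topology

variable {X : Type*} [NormedAddCommGroup X] [NormedSpace ℝ X]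

private lemma aux_sub_le (r s : ℝ) (a : EReal) (h : (r : EReal) ≤ (s : EReal) + a) :
    ((r - s : ℝ) : EReal) ≤ a := by
  induction a using EReal.rec with
  | bot => simp [EReal.add_bot] at h
  | coe t => rw [← EReal.coe_add] at h; exact_mod_cast by linarith [EReal.coe_le_coe_iff.mp h]
  | top => exact le_top

set_option maxHeartbeats 1000000 in
theorem stmt12 (Ω : Set X) (hΩ : Ω.Nonempty) (J : X → EReal) (hJbot : ∀ x, J x ≠ ⊥)
    (x₀ : X) (hx₀ : x₀ ∈ Ω) (ℓ : ℝ) (hℓ : ℓ < 1)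
    (hlip : ∀ x ∈ Ω, J x ≠ ⊤ → |(J x).toReal - (J x₀).toReal| ≤ ℓ * ‖x - x₀‖)
    (hval : (⨅ y : Ω, (((‖(y : X) - x₀‖ : ℝ) : EReal) + J y)) = J x₀)
    (hfin : J x₀ ≠ ⊤) :
    eFrechetSub 0 (fun x => ⨅ y : Ω, (((‖(y : X) - x‖ : ℝ) : EReal) + J y)) x₀
      = eFrechetSub 0 (fun x => J x + eIndicator Ω x) x₀ ∩ {p | ‖p‖ ≤ 1} := by
  have h1ℓ : (0:ℝ) < 1 - ℓ := by linarith
  have hne : Nonempty Ω := hΩ.to_subtype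
  set Jr : ℝ := (J x₀).toReal with hJrdef
  have hJx₀ : J x₀ = (Jr : EReal) := (EReal.coe_toReal hfin (hJbot x₀)).symm
  set d : X → EReal := fun x => ⨅ y : Ω, (((‖(y : X) - x‖ : ℝ) : EReal) + J y) with hd
  have hub : ∀ x : X, d x ≤ ((Jr + ‖x - x₀‖ : ℝ) : EReal) := by
    intro x
    have h1 : d x ≤ ((‖x₀ - x‖ : ℝ) : EReal) + J x₀ := iInf_le _ (⟨x₀, hx₀⟩ : Ω)
    rw [hJx₀, ← EReal.coe_add] at h1
    exact h1.trans (EReal.coe_le_coe_iff.mpr (by rw [norm_sub_rev]; linarith))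
  have hlb : ∀ x : X, ((Jr - ‖x - x₀‖ : ℝ) : EReal) ≤ d x := by
    intro x
    refine le_iInf fun y => ?_
    have h1 : (Jr : EReal) ≤ ((‖(y : X) - x₀‖ : ℝ) : EReal) + J y := by
      rw [← hJx₀, ← hval]; exact iInf_le _ y
    have h2 : ((‖(y : X) - x₀‖ : ℝ) : EReal) + J y
        ≤ ((‖x - x₀‖ : ℝ) : EReal) + (((‖(y : X) - x‖ : ℝ) : EReal) + J y) := by
      rw [← add_assoc, ← EReal.coe_add]
      refine add_le_add (EReal.coe_le_coe_iff.mpr ?_) le_rfl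
      have he : (y : X) - x₀ = (x - x₀) + ((y : X) - x) := by abel
      rw [he]
      exact norm_add_le _ _
    exact aux_sub_le _ _ _ (h1.trans h2)
  have hdT : ∀ x, d x ≠ ⊤ := fun x => ((hub x).trans_lt (EReal.coe_lt_top _)).ne
  have hdB : ∀ x, d x ≠ ⊥ := fun x => ((EReal.bot_lt_coe _).trans_le (hlb x)).ne'
  set D : X → ℝ := fun x => (d x).toReal with hDdef
  have hdcoe : ∀ x, d x = ((D x : ℝ) : EReal) := fun x => (EReal.coe_toReal (hdT x) (hdB x)).symm
  have hDub : ∀ x, D x ≤ Jr + ‖x - x₀‖ := fun x =>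
    EReal.coe_le_coe_iff.mp (by rw [← hdcoe x]; exact hub x)
  have hdx₀ : d x₀ = (Jr : EReal) := hval.trans hJx₀
  have hg₀ : J x₀ + eIndicator Ω x₀ = (Jr : EReal) := by
    simp [eIndicator, hx₀, hJx₀]
  have hdg : ∀ x, d x ≤ J x + eIndicator Ω x := by
    intro x
    by_cases hx : x ∈ Ω
    · have h1 : d x ≤ ((‖x - x‖ : ℝ) : EReal) + J x := iInf_le _ (⟨x, hx⟩ : Ω)
      simpa [eIndicator, hx] using h1
    · simp [eIndicator, hx, EReal.add_top_of_ne_bot (hJbot x)]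
  have hFd : ∀ p : X →L[ℝ] ℝ,
      (fun x => (d x - d x₀ - ((p (x - x₀) : ℝ) : EReal)) * ((‖x - x₀‖⁻¹ : ℝ) : EReal))
        = fun x => (((D x - Jr - p (x - x₀)) * ‖x - x₀‖⁻¹ : ℝ) : EReal) := by
    intro p; funext x
    rw [hdcoe x, hdx₀, ← EReal.coe_sub, ← EReal.coe_sub, ← EReal.coe_mul]
  ext p
  simp only [eFrechetSub, Set.mem_setOf_eq, Set.mem_inter_iff, EReal.coe_zero, neg_zero]
  constructor
  · intro hp
    refine ⟨?_, ?_⟩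
    · refine le_trans hp (liminf_le_liminf (Eventually.of_forall fun x => ?_))
      rw [hg₀, hdx₀]
      exact mul_le_mul_of_nonneg_right
        (EReal.sub_le_sub (EReal.sub_le_sub (hdg x) le_rfl) le_rfl)
        (EReal.coe_nonneg.mpr (inv_nonneg.mpr (norm_nonneg _)))
    · have key : ∀ v : X, p v ≤ ‖v‖ := by
        intro v
        rcases eq_or_ne v 0 with rfl | hv
        · simp
        by_contra hcon
        push_neg at hcon
        have hvpos : 0 < ‖v‖ := norm_pos_iff.mpr hv
        set K : ℝ := 1 - p v / ‖v‖ with hK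
        have hKneg : K < 0 := by
          rw [hK, sub_neg]
          exact (lt_div_iff₀ hvpos).mpr (by linarith)
        have h0 : ((K : ℝ) : EReal) < liminf
            (fun x => (d x - d x₀ - ((p (x - x₀) : ℝ) : EReal)) * ((‖x - x₀‖⁻¹ : ℝ) : EReal))
            (𝓝[≠] x₀) :=
          lt_of_lt_of_le (by exact_mod_cast hKneg) hp
        have hev := eventually_lt_of_lt_liminf h0
        have hφ : Tendsto (fun t : ℝ => x₀ + t • v) (𝓝[>] (0:ℝ)) (𝓝[≠] x₀) := by
          apply tendsto_nhdsWithin_of_tendsto_nhds_of_eventually_within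
          · exact ((continuous_const.add (continuous_id.smul continuous_const)).tendsto' 0 x₀
              (by simp)).mono_left nhdsWithin_le_nhds
          · filter_upwards [self_mem_nhdsWithin] with t ht
            simp only [Set.mem_compl_iff, Set.mem_singleton_iff, add_eq_left]
            exact smul_ne_zero (ne_of_gt (Set.mem_Ioi.mp ht)) hv
        obtain ⟨t, hKt, ht⟩ := ((hφ.eventually hev).and self_mem_nhdsWithin).exists
        have ht' : (0:ℝ) < t := ht
        rw [congrFun (hFd p) (x₀ + t • v)] at hKt
        set x' : X := x₀ + t • v with hx'
        have hxx : x' - x₀ = t • v := by rw [hx']; abel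
        have hnx : ‖x' - x₀‖ = t * ‖v‖ := by
          rw [hxx, norm_smul, Real.norm_eq_abs, abs_of_pos ht']
        have hDle : D x' - Jr - p (x' - x₀) ≤ t * ‖v‖ - t * p v := by
          have h1 := hDub x'
          have h2 : p (x' - x₀) = t * p v := by rw [hxx, map_smul, smul_eq_mul]
          rw [h2]
          nlinarith [hnx, h1]
        have hle : (D x' - Jr - p (x' - x₀)) * ‖x' - x₀‖⁻¹ ≤ K := by
          have hnpos : 0 < ‖x' - x₀‖ := by rw [hnx]; positivity
          rw [← div_eq_mul_inv, div_le_iff₀ hnpos, hnx, hK]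
          have heq : (1 - p v / ‖v‖) * (t * ‖v‖) = t * ‖v‖ - t * p v := by
            field_simp
          rw [heq]
          exact hDle
        have := EReal.coe_lt_coe_iff.mp hKt
        linarith
      refine p.opNorm_le_bound zero_le_one fun v => ?_
      rw [Real.norm_eq_abs, one_mul, abs_le]
      constructor
      · have := key (-v)
        simp only [map_neg, norm_neg] at this
        linarith
      · exact key v
  · rintro ⟨hp, hnp⟩
    rw [hFd p]
    have H : ∀ b : ℝ, b < 0 → ∀ᶠ x in 𝓝[≠] x₀,
        (b : EReal) < (((D x - Jr - p (x - x₀)) * ‖x - x₀‖⁻¹ : ℝ) : EReal) := by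
      intro b hb
      set δ : ℝ := (-b/4) * (1 - ℓ) / 3 with hδdef
      have hδ : 0 < δ := div_pos (mul_pos (by linarith) h1ℓ) (by norm_num)
      set ε : ℝ := min (-b/4) (1/2) with hεdef
      have hε : 0 < ε := lt_min (by linarith) (by norm_num)
      have hε' : ε ≤ -b/4 := min_le_left _ _
      have hε1 : ε ≤ 1/2 := min_le_right _ _
      have hneg : ((-δ : ℝ) : EReal) < (0 : EReal) := by
        exact_mod_cast (show (-δ:ℝ) < 0 by linarith)
      have hδ0 := lt_of_lt_of_le hneg hp
      have hev := eventually_lt_of_lt_liminf hδ0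
      rw [eventually_nhdsWithin_iff, Metric.eventually_nhds_iff] at hev
      obtain ⟨r, hr, hkey⟩ := hev
      have KEY : ∀ y, y ∈ Ω → J y ≠ ⊤ → dist y x₀ < r →
          -δ * ‖y - x₀‖ ≤ (J y).toReal - Jr - p (y - x₀) := by
        intro y hyΩ hyT hyr
        rcases eq_or_ne y x₀ with rfl | hyne
        · simp [hJrdef]
        · have h1 := hkey hyr (by simpa using hyne)
          have hJy : J y = (((J y).toReal : ℝ) : EReal) := (EReal.coe_toReal hyT (hJbot y)).symm
          have hgy : (J y + eIndicator Ω y - (J x₀ + eIndicator Ω x₀) - ((p (y - x₀) : ℝ) : EReal))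
              * ((‖y - x₀‖⁻¹ : ℝ) : EReal)
              = ((((J y).toReal - Jr - p (y - x₀)) * ‖y - x₀‖⁻¹ : ℝ) : EReal) := by
            rw [hg₀]
            nth_rewrite 1 [hJy]
            simp only [eIndicator, if_pos hyΩ, add_zero]
            rw [← EReal.coe_sub, ← EReal.coe_sub, ← EReal.coe_mul]
          rw [hgy] at h1
          have h2 : -δ < ((J y).toReal - Jr - p (y - x₀)) * ‖y - x₀‖⁻¹ := by exact_mod_cast h1
          have hypos : 0 < ‖y - x₀‖ := by
            rw [← dist_eq_norm]; exact dist_pos.mpr hyne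
          rw [← div_eq_mul_inv] at h2
          have h3 := (lt_div_iff₀ hypos).mp h2
          linarith
      have hR : 0 < r * (1 - ℓ) / 3 := by positivity
      filter_upwards [self_mem_nhdsWithin,
        nhdsWithin_le_nhds (Metric.ball_mem_nhds x₀ hR)] with x hx1 hx2
      have hxne : x ≠ x₀ := by simpa using hx1
      have hxpos : 0 < ‖x - x₀‖ := by rw [← dist_eq_norm]; exact dist_pos.mpr hxne
      have hxR : ‖x - x₀‖ < r * (1 - ℓ) / 3 := by
        rw [← dist_eq_norm]; exact Metric.mem_ball.mp hx2
      -- near-minimizer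
      have hlt : d x < ((D x + ε * ‖x - x₀‖ : ℝ) : EReal) := by
        rw [hdcoe x]
        exact_mod_cast (by nlinarith : D x < D x + ε * ‖x - x₀‖)
      obtain ⟨y, hy⟩ := iInf_lt_iff.mp
        (show (⨅ y : Ω, (((‖(y : X) - x‖ : ℝ) : EReal) + J (y : X))) < _ from hlt)
      have hyT : J (y : X) ≠ ⊤ := by
        intro h
        rw [h, EReal.add_top_of_ne_bot (EReal.coe_ne_bot _)] at hy
        exact absurd hy not_top_lt
      have hJy : J (y : X) = (((J (y : X)).toReal : ℝ) : EReal) :=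
        (EReal.coe_toReal hyT (hJbot _)).symm
      set jy : ℝ := (J (y : X)).toReal with hjydef
      have hyre : ‖(y : X) - x‖ + jy < D x + ε * ‖x - x₀‖ := by
        rw [hJy, ← EReal.coe_add] at hy
        exact_mod_cast hy
      have hlipy : |jy - Jr| ≤ ℓ * ‖(y : X) - x₀‖ := hlip _ y.2 hyT
      have htri : ‖(y : X) - x₀‖ ≤ ‖(y : X) - x‖ + ‖x - x₀‖ := by
        have he : (y : X) - x₀ = ((y : X) - x) + (x - x₀) := by abel
        rw [he]; exact norm_add_le _ _
      have e1 : ε * ‖x - x₀‖ ≤ (1/2) * ‖x - x₀‖ :=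
        mul_le_mul_of_nonneg_right hε1 (norm_nonneg _)
      have e2 : Jr - jy ≤ ℓ * ‖(y : X) - x₀‖ := by
        have := (abs_le.mp hlipy).1; linarith
      have hy0 : ‖(y : X) - x₀‖ < 3 * ‖x - x₀‖ / (1 - ℓ) := by
        rw [lt_div_iff₀ h1ℓ]
        nlinarith [hDub x]
      have hyr : dist (y : X) x₀ < r := by
        rw [dist_eq_norm]
        have : 3 * ‖x - x₀‖ / (1 - ℓ) < r := by
          rw [div_lt_iff₀ h1ℓ]; nlinarith
        linarith
      have hKEY := KEY _ y.2 hyT hyr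
      have hpb : -‖(y : X) - x‖ ≤ p ((y : X) - x) := by
        have h1 : |p ((y : X) - x)| ≤ ‖(y : X) - x‖ := by
          rw [← Real.norm_eq_abs]
          calc ‖p ((y : X) - x)‖ ≤ ‖p‖ * ‖(y : X) - x‖ := p.le_opNorm _
            _ ≤ 1 * ‖(y : X) - x‖ := mul_le_mul_of_nonneg_right hnp (norm_nonneg _)
            _ = ‖(y : X) - x‖ := one_mul _
        linarith [(abs_le.mp h1).1]
      have hmap : p ((y : X) - x₀) - p (x - x₀) = p ((y : X) - x) := by
        rw [← map_sub]; congr 1; abel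
      have hδy : δ * ‖(y : X) - x₀‖ ≤ δ * (3 * ‖x - x₀‖ / (1 - ℓ)) :=
        mul_le_mul_of_nonneg_left hy0.le hδ.le
      have hδeq : δ * (3 * ‖x - x₀‖ / (1 - ℓ)) = (-b/4) * ‖x - x₀‖ := by
        rw [hδdef]; field_simp
      have hεx : ε * ‖x - x₀‖ ≤ (-b/4) * ‖x - x₀‖ :=
        mul_le_mul_of_nonneg_right hε' (norm_nonneg _)
      have hbx : b * ‖x - x₀‖ < (b/2) * ‖x - x₀‖ := by nlinarith
      have hbN : b * ‖x - x₀‖ < D x - Jr - p (x - x₀) := by linarith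
      refine EReal.coe_lt_coe_iff.mpr ?_
      rw [← div_eq_mul_inv, lt_div_iff₀ hxpos]
      linarith
    refine (le_liminf_iff (by isBoundedDefault) (by isBoundedDefault)).mpr ?_
    intro y hy
    induction y using EReal.rec with
    | bot => exact Eventually.of_forall fun x => EReal.bot_lt_coe _
    | coe b => exact H b (by exact_mod_cast hy)
    | top => exact absurd hy (by simp)
end
end

section
/- Let X be a normed space, Ω a nonempty subset of X, and x̄ ∈ Ω. Then the Fréchet subdifferential of the distance function d(·;Ω) at x̄ equals N̂(x̄;Ω) ∩ B*, where N̂(x̄;Ω) is the Fréchet normal cone to Ω at x̄ and B* is the closed unit dual ball. -/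
noncomputable section
open Filter Topology

variable {X : Type*} [NormedAddCommGroup X] [NormedSpace ℝ X]

set_option linter.unusedSectionVars false

lemma dist_iInf_eq (Ω : Set X) (hΩ : Ω.Nonempty) (x : X) :
    (⨅ ω : Ω, ((‖x - (ω : X)‖ : ℝ) : EReal)) = ((Metric.infDist x Ω : ℝ) : EReal) := by
  apply le_antisymm
  · by_contra h
    push_neg at h
    obtain ⟨c, hc1, hc2⟩ := exists_between h
    have hne : c ≠ ⊤ := (hc2.trans_le (iInf_le _ (⟨hΩ.some, hΩ.some_mem⟩ : Ω))).ne_top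
    have hnb : c ≠ ⊥ := ((EReal.bot_lt_coe _).trans hc1).ne'
    lift c to ℝ using ⟨hne, hnb⟩
    rw [EReal.coe_lt_coe_iff] at hc1
    obtain ⟨ω, hω, hd⟩ := (Metric.infDist_lt_iff hΩ).mp hc1
    have : (⨅ ω : Ω, ((‖x - (ω : X)‖ : ℝ) : EReal)) ≤ ((‖x - ω‖ : ℝ) : EReal) :=
      iInf_le _ (⟨ω, hω⟩ : Ω)
    rw [← dist_eq_norm] at this
    exact absurd (this.trans_lt (by exact_mod_cast hd)) hc2.not_gt
  · refine le_iInf fun ω => ?_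
    exact_mod_cast (Metric.infDist_le_dist_of_mem ω.2).trans_eq (dist_eq_norm _ _)

/-- Criterion for membership in the Fréchet subdifferential of the distance function. -/
lemma memA (Ω : Set X) (hΩ : Ω.Nonempty) (x₀ : X) (hx₀ : x₀ ∈ Ω) (p : X →L[ℝ] ℝ) :
    p ∈ eFrechetSub 0 (fun x => ⨅ ω : Ω, ((‖x - (ω : X)‖ : ℝ) : EReal)) x₀ ↔
      ∀ ε > 0, ∀ᶠ x in 𝓝[≠] x₀, p (x - x₀) ≤ Metric.infDist x Ω + ε * ‖x - x₀‖ := by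
  set q : X → ℝ := fun x => (Metric.infDist x Ω - p (x - x₀)) * ‖x - x₀‖⁻¹ with hq
  have key : ∀ x : X, ((⨅ ω : Ω, ((‖x - (ω : X)‖ : ℝ) : EReal)) -
      (⨅ ω : Ω, ((‖x₀ - (ω : X)‖ : ℝ) : EReal)) - ((p (x - x₀) : ℝ) : EReal)) *
      ((‖x - x₀‖⁻¹ : ℝ) : EReal) = ((q x : ℝ) : EReal) := by
    intro x
    rw [dist_iInf_eq Ω hΩ x, dist_iInf_eq Ω hΩ x₀, Metric.infDist_zero_of_mem hx₀,
      EReal.coe_zero, sub_zero, ← EReal.coe_sub, ← EReal.coe_mul]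
  have hmemne : ∀ᶠ x in 𝓝[≠] x₀, x ≠ x₀ := eventually_mem_nhdsWithin
  rw [eFrechetSub, Set.mem_setOf_eq]
  simp only [key]
  rw [EReal.coe_zero, neg_zero, le_liminf_iff]
  constructor
  · intro h ε hε
    have h2 := h ((-(ε / 2) : ℝ) : EReal) (by exact_mod_cast (by linarith : -(ε/2) < (0:ℝ)))
    filter_upwards [h2, hmemne] with x hx hne
    rw [EReal.coe_lt_coe_iff] at hx
    have hn : (0:ℝ) < ‖x - x₀‖ := by
      rw [norm_pos_iff]; exact sub_ne_zero.mpr hne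
    have hmul := mul_lt_mul_of_pos_right hx hn
    have heq : q x * ‖x - x₀‖ = Metric.infDist x Ω - p (x - x₀) := by
      rw [hq]; field_simp
    rw [heq] at hmul
    nlinarith
  · intro h c hc
    rcases eq_or_ne c ⊥ with rfl | hcb
    · exact Eventually.of_forall fun x => EReal.bot_lt_coe _
    · have hct : c ≠ ⊤ := hc.ne_top
      lift c to ℝ using ⟨hct, hcb⟩
      have hc' : c < 0 := by exact_mod_cast hc
      have h2 := h (-(c / 2)) (by linarith)
      filter_upwards [h2, hmemne] with x hx hne
      rw [EReal.coe_lt_coe_iff]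
      have hn : (0:ℝ) < ‖x - x₀‖ := by
        rw [norm_pos_iff]; exact sub_ne_zero.mpr hne
      rw [hq]
      have : c * ‖x - x₀‖ < (Metric.infDist x Ω - p (x - x₀)) := by nlinarith
      calc c = c * ‖x - x₀‖ * ‖x - x₀‖⁻¹ := by field_simp
        _ < (Metric.infDist x Ω - p (x - x₀)) * ‖x - x₀‖⁻¹ :=
            mul_lt_mul_of_pos_right this (inv_pos.mpr hn)

/-- Criterion for membership in the Fréchet normal cone (subdifferential of indicator). -/
lemma memB (Ω : Set X) (x₀ : X) (hx₀ : x₀ ∈ Ω) (p : X →L[ℝ] ℝ) :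
    p ∈ eFrechetSub 0 (eIndicator Ω) x₀ ↔
      ∀ ε > 0, ∀ᶠ x in 𝓝[≠] x₀, x ∈ Ω → p (x - x₀) ≤ ε * ‖x - x₀‖ := by
  classical
  have hmemne : ∀ᶠ x in 𝓝[≠] x₀, x ≠ x₀ := eventually_mem_nhdsWithin
  have hI0 : eIndicator Ω x₀ = 0 := by simp [eIndicator, hx₀]
  have keymem : ∀ x : X, x ∈ Ω →
      (eIndicator Ω x - eIndicator Ω x₀ - ((p (x - x₀) : ℝ) : EReal)) *
        ((‖x - x₀‖⁻¹ : ℝ) : EReal) = (((-(p (x - x₀)) * ‖x - x₀‖⁻¹ : ℝ)) : EReal) := by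
    intro x hx
    rw [hI0, eIndicator]
    simp only [hx, if_true]
    rw [sub_zero, zero_sub, ← EReal.coe_neg, ← EReal.coe_mul]
  have keynot : ∀ x : X, x ≠ x₀ → x ∉ Ω →
      (eIndicator Ω x - eIndicator Ω x₀ - ((p (x - x₀) : ℝ) : EReal)) *
        ((‖x - x₀‖⁻¹ : ℝ) : EReal) = ⊤ := by
    intro x hne hx
    have hn : (0:ℝ) < ‖x - x₀‖⁻¹ := by
      rw [inv_pos, norm_pos_iff]; exact sub_ne_zero.mpr hne
    rw [hI0, eIndicator]
    simp only [hx, if_false]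
    rw [sub_zero, EReal.top_sub_coe, EReal.top_mul_coe_of_pos hn]
  rw [eFrechetSub, Set.mem_setOf_eq, EReal.coe_zero, neg_zero, le_liminf_iff]
  constructor
  · intro h ε hε
    have h2 := h ((-ε : ℝ) : EReal) (by exact_mod_cast (by linarith : -ε < (0:ℝ)))
    filter_upwards [h2, hmemne] with x hx hne hmem
    rw [keymem x hmem, EReal.coe_lt_coe_iff] at hx
    have hn : (0:ℝ) < ‖x - x₀‖ := by
      rw [norm_pos_iff]; exact sub_ne_zero.mpr hne
    have hmul := mul_lt_mul_of_pos_right hx hn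
    have heq : -(p (x - x₀)) * ‖x - x₀‖⁻¹ * ‖x - x₀‖ = -(p (x - x₀)) := by field_simp
    rw [heq] at hmul
    nlinarith
  · intro h c hc
    rcases eq_or_ne c ⊥ with rfl | hcb
    · filter_upwards [hmemne] with x hne
      by_cases hx : x ∈ Ω
      · rw [keymem x hx]; exact EReal.bot_lt_coe _
      · rw [keynot x hne hx]; exact bot_lt_top
    · have hct : c ≠ ⊤ := hc.ne_top
      lift c to ℝ using ⟨hct, hcb⟩
      have hc' : c < 0 := by exact_mod_cast hc
      have h2 := h (-(c / 2)) (by linarith)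
      filter_upwards [h2, hmemne] with x hx hne
      by_cases hmem : x ∈ Ω
      · rw [keymem x hmem, EReal.coe_lt_coe_iff]
        have hn : (0:ℝ) < ‖x - x₀‖ := by
          rw [norm_pos_iff]; exact sub_ne_zero.mpr hne
        have hle := hx hmem
        have : c * ‖x - x₀‖ < -(p (x - x₀)) := by nlinarith
        calc c = c * ‖x - x₀‖ * ‖x - x₀‖⁻¹ := by field_simp
          _ < -(p (x - x₀)) * ‖x - x₀‖⁻¹ :=
              mul_lt_mul_of_pos_right this (inv_pos.mpr hn)
      · rw [keynot x hne hmem]; exact EReal.coe_lt_top c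

theorem stmt13 (Ω : Set X) (hΩ : Ω.Nonempty) (x₀ : X) (hx₀ : x₀ ∈ Ω) :
    eFrechetSub 0 (fun x => ⨅ ω : Ω, ((‖x - (ω : X)‖ : ℝ) : EReal)) x₀
      = eFrechetSub 0 (eIndicator Ω) x₀ ∩ {p | ‖p‖ ≤ 1} := by
  ext p
  rw [Set.mem_inter_iff, Set.mem_setOf_eq, memA Ω hΩ x₀ hx₀ p, memB Ω x₀ hx₀ p]
  constructor
  · intro h
    constructor
    · intro ε hε
      filter_upwards [h ε hε] with x hx hmem
      rwa [Metric.infDist_zero_of_mem hmem, zero_add] at hx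
    · -- ‖p‖ ≤ 1
      refine le_of_forall_pos_le_add fun ε hε => ?_
      obtain ⟨δ, hδ, hδ'⟩ := Metric.eventually_nhds_iff.mp (eventually_nhdsWithin_iff.mp (h ε hε))
      refine (p.opNorm_le_bound (by linarith) fun v => ?_)
      rcases eq_or_ne v 0 with rfl | hv
      · simp
      · have hvn : (0:ℝ) < ‖v‖ := norm_pos_iff.mpr hv
        have key : ∀ w : X, ‖w‖ = 1 → p w ≤ 1 + ε := by
          intro w hw
          set x := x₀ + (δ / 2) • w with hxdef
          have hxx : x - x₀ = (δ / 2) • w := by rw [hxdef]; abel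
          have hdist : dist x x₀ < δ := by
            rw [dist_eq_norm, hxx, norm_smul, hw, Real.norm_eq_abs,
              abs_of_pos (by linarith)]
            simp; linarith
          have hne : x ∈ ({x₀}ᶜ : Set X) := by
            simp only [Set.mem_compl_iff, Set.mem_singleton_iff, hxdef]
            intro hcon
            have : (δ / 2) • w = 0 := by
              have := congrArg (fun z => z - x₀) hcon
              simpa using this
            rw [smul_eq_zero] at this
            rcases this with h1 | h1
            · linarith
            · rw [h1, norm_zero] at hw; linarith
          have := hδ' hdist hne
          rw [hxx] at this
          have hinf : Metric.infDist x Ω ≤ δ / 2 := by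
            have := Metric.infDist_le_dist_of_mem (x := x) hx₀
            rw [dist_eq_norm, hxx, norm_smul, hw, Real.norm_eq_abs,
              abs_of_pos (by linarith : (0:ℝ) < δ/2)] at this
            simpa using this
          have hnorm : ‖(δ / 2) • w‖ = δ / 2 := by
            rw [norm_smul, hw, Real.norm_eq_abs, abs_of_pos (by linarith)]; ring
          rw [map_smul, smul_eq_mul, hnorm] at this
          have : (δ / 2) * p w ≤ (1 + ε) * (δ / 2) := by linarith
          nlinarith
        have h1 : p (‖v‖⁻¹ • v) ≤ 1 + ε := key _ (by
          rw [norm_smul, Real.norm_eq_abs, abs_of_pos (inv_pos.mpr hvn),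
            inv_mul_cancel₀ hvn.ne'])
        have h2 : p (-(‖v‖⁻¹ • v)) ≤ 1 + ε := key _ (by
          rw [norm_neg, norm_smul, Real.norm_eq_abs, abs_of_pos (inv_pos.mpr hvn),
            inv_mul_cancel₀ hvn.ne'])
        rw [map_neg] at h2
        rw [map_smul, smul_eq_mul] at h1 h2
        rw [Real.norm_eq_abs, abs_le]
        have e1 := mul_le_mul_of_nonneg_left h1 hvn.le
        have e2 := mul_le_mul_of_nonneg_left h2 hvn.le
        have heq : ‖v‖ * (‖v‖⁻¹ * p v) = p v := by field_simp
        rw [mul_neg, heq] at e2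
        rw [heq] at e1
        constructor <;> nlinarith
  · rintro ⟨hB, hnorm⟩ ε hε
    set ε' := min ε 1 with hε'def
    have hε' : 0 < ε' := lt_min hε one_pos
    have hε'le : ε' ≤ ε := min_le_left _ _
    have hε'1 : ε' ≤ 1 := min_le_right _ _
    obtain ⟨r, hr, hr'⟩ := Metric.eventually_nhds_iff.mp (eventually_nhdsWithin_iff.mp (hB (ε' / 4) (by linarith)))
    have hΩbound : ∀ ω ∈ Ω, dist ω x₀ < r → p (ω - x₀) ≤ (ε' / 4) * ‖ω - x₀‖ := by
      intro ω hω hd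
      rcases eq_or_ne ω x₀ with rfl | hne
      · simp
      · exact hr' hd (by simpa using hne) hω
    rw [eventually_nhdsWithin_iff, Metric.eventually_nhds_iff]
    refine ⟨r / 3, by linarith, fun x hd hne => ?_⟩
    have hxn : (0:ℝ) < ‖x - x₀‖ := by
      rw [norm_pos_iff, sub_ne_zero]; simpa using hne
    have hdx : ‖x - x₀‖ < r / 3 := by rwa [dist_eq_norm] at hd
    -- choose a near-optimal ω
    obtain ⟨ω, hω, hdist⟩ := (Metric.infDist_lt_iff hΩ).mp
      (lt_add_of_pos_right _ (by positivity) :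
        Metric.infDist x Ω < Metric.infDist x Ω + (ε' / 4) * ‖x - x₀‖)
    have hinfle : Metric.infDist x Ω ≤ ‖x - x₀‖ := by
      have := Metric.infDist_le_dist_of_mem (x := x) hx₀
      rwa [dist_eq_norm] at this
    have hωx₀ : ‖ω - x₀‖ ≤ 3 * ‖x - x₀‖ := by
      have h1 : ‖ω - x₀‖ ≤ ‖ω - x‖ + ‖x - x₀‖ := norm_sub_le_norm_sub_add_norm_sub ω x x₀
      have h2 : ‖ω - x‖ = dist x ω := by rw [dist_eq_norm, norm_sub_rev]
      nlinarith
    have hdω : dist ω x₀ < r := by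
      rw [dist_eq_norm]
      calc ‖ω - x₀‖ ≤ 3 * ‖x - x₀‖ := hωx₀
        _ < 3 * (r / 3) := by linarith
        _ = r := by ring
    have hp1 : p (x - ω) ≤ Metric.infDist x Ω + (ε' / 4) * ‖x - x₀‖ := by
      have h1 : p (x - ω) ≤ ‖p‖ * ‖x - ω‖ := le_trans (le_abs_self _) (p.le_opNorm _)
      have h2 : ‖x - ω‖ = dist x ω := (dist_eq_norm x ω).symm
      nlinarith [norm_nonneg (x - ω), hdist]
    have hp2 : p (ω - x₀) ≤ (ε' / 4) * (3 * ‖x - x₀‖) := by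
      have := hΩbound ω hω hdω
      nlinarith [hωx₀]
    have hsplit : p (x - x₀) = p (x - ω) + p (ω - x₀) := by
      rw [← map_add]; congr 1; abel
    rw [hsplit]
    have : p (x - ω) + p (ω - x₀) ≤ Metric.infDist x Ω + ε' * ‖x - x₀‖ := by linarith
    nlinarith
end
end

section
/- Let X be a normed space, φ, f: X → (-∞,∞] with φ(0) = 0, T(x) = inf{φ(y−x)+f(y) : y ∈ X}, and x̄ with T(x̄) = f(x̄) finite. Then for every s > 0, the s-Hölder subdifferential satisfies ∂_s T(x̄) ⊂ ∂_s f(x̄) ∩ [−∂_s φ(0)]. -/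
noncomputable section
open Filter Topology

variable {X : Type*} [NormedAddCommGroup X] [NormedSpace ℝ X]

theorem stmt15 (φ f : X → EReal) (hφbot : ∀ x, φ x ≠ ⊥) (hfbot : ∀ x, f x ≠ ⊥)
    (hφ0 : φ 0 = 0) (x₀ : X) (hS : infConv φ f x₀ = f x₀) (hfin : f x₀ ≠ ⊤) :
    ∀ s : ℝ, 0 < s →
      holderSub s (infConv φ f) x₀ ⊆
        holderSub s f x₀ ∩ {p | -p ∈ holderSub s φ 0} := by
  intro s hs p hp
  set T := infConv φ f with hT
  simp only [holderSub, Set.mem_setOf_eq] at hp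
  obtain ⟨r, hr⟩ : ∃ r : ℝ, f x₀ = (r : EReal) := by
    lift f x₀ to ℝ using ⟨hfin, hfbot x₀⟩ with r hr
    exact ⟨r, rfl⟩
  have hTle : ∀ x, T x ≤ f x := by
    intro x
    have := iInf_le (fun y => φ (y - x) + f y) x
    simpa [sub_self, hφ0, hT, infConv] using this
  have hTφ : ∀ x, T x ≤ φ (x₀ - x) + (r : EReal) := by
    intro x
    have := iInf_le (fun y => φ (y - x) + f y) x₀
    rwa [hr] at this
  constructor
  · -- f part
    simp only [holderSub, Set.mem_setOf_eq]
    refine lt_of_lt_of_le hp (liminf_le_liminf ?_)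
    filter_upwards with x
    apply mul_le_mul_of_nonneg_right
    · exact EReal.sub_le_sub (EReal.sub_le_sub (hTle x) hS.ge) le_rfl
    · exact_mod_cast inv_nonneg.2 (by positivity)
  · -- φ part
    simp only [holderSub, Set.mem_setOf_eq]
    refine lt_of_lt_of_le hp ?_
    have hmap : Filter.map (fun x => x₀ - x) (𝓝[≠] x₀) = 𝓝[≠] (0 : X) := by
      have hfun : (fun x : X => x₀ - x)
          = ⇑((Homeomorph.neg X).trans (Homeomorph.addLeft x₀)) := by
        ext x; simp [sub_eq_add_neg]
      rw [hfun, Homeomorph.map_punctured_nhds_eq]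
      norm_num
    rw [← hmap, ← Filter.liminf_comp]
    refine liminf_le_liminf ?_
    filter_upwards with x
    have h1 : T x - T x₀ ≤ φ (x₀ - x) := by
      rw [hS, hr]
      calc T x - (r : EReal) ≤ (φ (x₀ - x) + (r : EReal)) - (r : EReal) :=
            EReal.sub_le_sub (hTφ x) le_rfl
        _ = φ (x₀ - x) := EReal.add_sub_cancel_right
    have h2 : (-p) (x₀ - x) = p (x - x₀) := by
      simp [map_sub]; ring
    have h3 : ‖x₀ - x‖ = ‖x - x₀‖ := norm_sub_rev _ _
    simp only [Function.comp, h3, h2, hφ0, sub_zero]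
    apply mul_le_mul_of_nonneg_right
    · exact EReal.sub_le_sub h1 le_rfl
    · exact_mod_cast inv_nonneg.2 (by positivity)
end
end

section
/- Let X be a normed space, φ: X → (-∞,∞] with φ(0) = 0 coercive with constant m > 0, and f: X → (-∞,∞] center-Lipschitz on dom f at x̄ with constant ℓ, 0 ≤ ℓ < m. Let T(x) = inf{φ(y−x)+f(y) : y ∈ X} and suppose x̄ ∈ dom T with T(x̄) = f(x̄). Then for every s > 0, ∂_s T(x̄) = ∂_s f(x̄) ∩ [−∂_s φ(0)]. -/
noncomputable section
open Filter Topology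

variable {X : Type*} [NormedAddCommGroup X] [NormedSpace ℝ X]

lemma bot_lt_liminf_iff {α : Type*} {F : Filter α} {g : α → EReal} :
    ⊥ < Filter.liminf g F ↔ ∃ c : ℝ, ∀ᶠ x in F, (c : EReal) ≤ g x := by
  rw [Filter.liminf_eq]
  constructor
  · intro h
    rw [lt_sSup_iff] at h
    obtain ⟨a, ha, hba⟩ := h
    induction a with
    | bot => exact absurd hba (lt_irrefl _)
    | coe r => exact ⟨r, ha⟩
    | top => exact ⟨0, ha.mono fun x hx => le_trans le_top hx⟩
  · rintro ⟨c, hc⟩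
    exact lt_of_lt_of_le (EReal.bot_lt_coe c) (le_sSup hc)

lemma coe_le_mul_inv_iff {A : EReal} {h c : ℝ} (hh : 0 < h) :
    (c : EReal) ≤ A * ((h⁻¹ : ℝ) : EReal) ↔ ((c * h : ℝ) : EReal) ≤ A := by
  rw [EReal.coe_inv, show A * (h : EReal)⁻¹ = A / (h : EReal) from rfl,
    EReal.le_div_iff_mul_le (by exact_mod_cast hh) (EReal.coe_ne_top h), ← EReal.coe_mul]

lemma coe_le_sub_sub_iff {A : EReal} {r q b : ℝ} :
    (b : EReal) ≤ A - (r : EReal) - (q : EReal) ↔ ((b + q + r : ℝ) : EReal) ≤ A := by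
  rw [EReal.le_sub_iff_add_le (Or.inl (EReal.coe_ne_bot q)) (Or.inl (EReal.coe_ne_top q)),
      ← EReal.coe_add,
      EReal.le_sub_iff_add_le (Or.inl (EReal.coe_ne_bot r)) (Or.inl (EReal.coe_ne_top r)),
      ← EReal.coe_add]

lemma holderSub_iff {s : ℝ} (hs : 0 < s) {g : X → EReal} {x₀ : X} {p : X →L[ℝ] ℝ} {r : ℝ}
    (hg : g x₀ = (r : EReal)) :
    p ∈ holderSub s g x₀ ↔ ∃ c : ℝ, c ≤ 0 ∧ ∃ δ : ℝ, 0 < δ ∧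
      ∀ x : X, ‖x - x₀‖ < δ →
        ((r + p (x - x₀) + c * ‖x - x₀‖ ^ (1 + s) : ℝ) : EReal) ≤ g x := by
  have h1s : (0:ℝ) < 1 + s := by linarith
  constructor
  · intro hp
    obtain ⟨c₀, hc₀⟩ := bot_lt_liminf_iff.mp hp
    rw [eventually_nhdsWithin_iff, Metric.eventually_nhds_iff] at hc₀
    obtain ⟨δ, hδ, hb⟩ := hc₀
    refine ⟨min c₀ 0, min_le_right _ _, δ, hδ, fun x hx => ?_⟩
    by_cases hxx : x = x₀
    · subst hxx
      simp [sub_self, Real.zero_rpow (ne_of_gt h1s), hg]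
    · have hpow : 0 < ‖x - x₀‖ ^ (1 + s) :=
        Real.rpow_pos_of_pos (norm_pos_iff.mpr (sub_ne_zero.mpr hxx)) _
      have := hb (by rwa [dist_eq_norm]) (by simpa using hxx)
      rw [hg, coe_le_mul_inv_iff hpow, coe_le_sub_sub_iff] at this
      refine le_trans (EReal.coe_le_coe_iff.mpr ?_) this
      have : min c₀ 0 * ‖x - x₀‖ ^ (1 + s) ≤ c₀ * ‖x - x₀‖ ^ (1 + s) :=
        mul_le_mul_of_nonneg_right (min_le_left _ _) hpow.le
      linarith
  · rintro ⟨c, _, δ, hδ, hb⟩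
    refine bot_lt_liminf_iff.mpr ⟨c, ?_⟩
    rw [eventually_nhdsWithin_iff, Metric.eventually_nhds_iff]
    refine ⟨δ, hδ, fun x hx hxx => ?_⟩
    have hxx : x ≠ x₀ := by simpa using hxx
    have hpow : 0 < ‖x - x₀‖ ^ (1 + s) :=
      Real.rpow_pos_of_pos (norm_pos_iff.mpr (sub_ne_zero.mpr hxx)) _
    rw [hg, coe_le_mul_inv_iff hpow, coe_le_sub_sub_iff]
    refine le_trans (EReal.coe_le_coe_iff.mpr (le_of_eq (by ring))) (hb x ?_)
    rwa [dist_eq_norm] at hx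

theorem stmt16 (φ f : X → EReal) (hφbot : ∀ x, φ x ≠ ⊥) (hfbot : ∀ x, f x ≠ ⊥)
    (hφ0 : φ 0 = 0) (m : ℝ) (hm : 0 < m)
    (hcoer : ∀ x : X, ((m * ‖x‖ : ℝ) : EReal) ≤ φ x)
    (x₀ : X) (ℓ : ℝ) (hℓ0 : 0 ≤ ℓ) (hℓm : ℓ < m)
    (hlip : ∀ x : X, f x ≠ ⊤ → |(f x).toReal - (f x₀).toReal| ≤ ℓ * ‖x - x₀‖)
    (hdom : infConv φ f x₀ ≠ ⊤) (hS : infConv φ f x₀ = f x₀) :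
    ∀ s : ℝ, 0 < s →
      holderSub s (infConv φ f) x₀
        = holderSub s f x₀ ∩ {p | -p ∈ holderSub s φ 0} := by
  intro s hs
  have h1s : (0:ℝ) < 1 + s := by linarith
  have hfx₀top : f x₀ ≠ ⊤ := by rw [← hS]; exact hdom
  set F0 : ℝ := (f x₀).toReal with hF0def
  have hfx₀ : f x₀ = (F0 : EReal) := (EReal.coe_toReal hfx₀top (hfbot x₀)).symm
  have hTx₀ : infConv φ f x₀ = (F0 : EReal) := by rw [hS, hfx₀]
  have hφ0' : φ 0 = ((0:ℝ) : EReal) := by rw [hφ0]; rfl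
  have hTle : ∀ x, infConv φ f x ≤ f x := fun x => by
    have h := iInf_le (fun y => φ (y - x) + f y) x
    simpa [infConv, sub_self, hφ0] using h
  have hTy : ∀ x y, infConv φ f x ≤ φ (y - x) + f y := fun x y => iInf_le _ y
  ext p
  simp only [Set.mem_inter_iff, Set.mem_setOf_eq]
  constructor
  · intro hp
    obtain ⟨c, hc0, δ, hδ, hb⟩ := (holderSub_iff hs hTx₀).mp hp
    constructor
    · exact (holderSub_iff hs hfx₀).mpr
        ⟨c, hc0, δ, hδ, fun x hx => (hb x hx).trans (hTle x)⟩
    · refine (holderSub_iff hs hφ0').mpr ⟨c, hc0, δ, hδ, fun u hu => ?_⟩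
      simp only [sub_zero, ContinuousLinearMap.neg_apply, zero_add] at hu ⊢
      have hxu : (x₀ - u) - x₀ = -u := by abel
      have h1 := hb (x₀ - u) (by rw [hxu, norm_neg]; exact hu)
      rw [hxu, norm_neg, map_neg] at h1
      have h2 : infConv φ f (x₀ - u) ≤ φ u + (F0 : EReal) := by
        have h := hTy (x₀ - u) x₀
        rwa [show x₀ - (x₀ - u) = u by abel, hfx₀] at h
      have h3 := EReal.sub_le_of_le_add (h1.trans h2)
      rw [← EReal.coe_sub] at h3
      exact le_trans (EReal.coe_le_coe_iff.mpr (le_of_eq (by ring))) h3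
  · rintro ⟨hpf, hpφ⟩
    obtain ⟨c₁, hc₁, δ₁, hδ₁, hbf⟩ := (holderSub_iff hs hfx₀).mp hpf
    obtain ⟨c₂, hc₂, δ₂, hδ₂, hbφ⟩ := (holderSub_iff hs hφ0').mp hpφ
    have hbφ' : ∀ u : X, ‖u‖ < δ₂ → ((-(p u) + c₂ * ‖u‖ ^ (1 + s) : ℝ) : EReal) ≤ φ u := by
      intro u hu
      have h := hbφ u (by simpa using hu)
      simpa [sub_zero, ContinuousLinearMap.neg_apply, zero_add] using h
    have hmℓ : 0 < m - ℓ := by linarith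
    set K : ℝ := (ℓ + ‖p‖) / (m - ℓ) + 1 with hK
    have hK1 : 1 ≤ K := by
      have : 0 ≤ (ℓ + ‖p‖) / (m - ℓ) := div_nonneg (by positivity) hmℓ.le
      simp only [hK]; linarith
    have hK0 : 0 < K := by linarith
    set C : ℝ := c₂ * K ^ (1 + s) + c₁ * (K + 1) ^ (1 + s) with hC
    have hC0 : C ≤ 0 := by
      have h1 : (0:ℝ) ≤ K ^ (1+s) := Real.rpow_nonneg hK0.le _
      have h2 : (0:ℝ) ≤ (K+1) ^ (1+s) := Real.rpow_nonneg (by linarith) _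
      have := mul_nonpos_of_nonpos_of_nonneg hc₂ h1
      have := mul_nonpos_of_nonpos_of_nonneg hc₁ h2
      simp only [hC]; linarith
    refine (holderSub_iff hs hTx₀).mpr
      ⟨C, hC0, min (δ₁/(K+1)) (δ₂/K), lt_min (by positivity) (by positivity), fun x hx => ?_⟩
    set t := ‖x - x₀‖ with ht
    have ht0 : 0 ≤ t := norm_nonneg _
    have hxδ₁ : (K+1) * t < δ₁ := by
      have h := lt_of_lt_of_le hx (min_le_left _ _)
      rw [lt_div_iff₀ (by linarith)] at h
      linarith [h]
    have hxδ₂ : K * t < δ₂ := by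
      have h := lt_of_lt_of_le hx (min_le_right _ _)
      rw [lt_div_iff₀ hK0] at h
      linarith [h]
    simp only [infConv]
    refine le_iInf fun y => ?_
    by_cases hfy : f y = ⊤
    · rw [hfy, EReal.add_top_iff_ne_bot.mpr (hφbot _)]; exact le_top
    · have hfyr : f y = (((f y).toReal : ℝ) : EReal) := (EReal.coe_toReal hfy (hfbot y)).symm
      set fy : ℝ := (f y).toReal with hfydef
      have hlipy : |fy - F0| ≤ ℓ * ‖y - x₀‖ := hlip y hfy
      have htri : ‖y - x₀‖ ≤ ‖y - x‖ + t := by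
        calc ‖y - x₀‖ = ‖(y - x) + (x - x₀)‖ := by rw [sub_add_sub_cancel]
        _ ≤ ‖y - x‖ + ‖x - x₀‖ := norm_add_le _ _
      by_cases hcase : ‖y - x‖ ≤ K * t
      · have hyx₀ : ‖y - x₀‖ < δ₁ := lt_of_le_of_lt (le_trans htri (by linarith)) hxδ₁
        have hyx : ‖y - x‖ < δ₂ := lt_of_le_of_lt hcase hxδ₂
        have h1 := hbφ' (y - x) hyx
        have h2 := hbf y hyx₀
        have hadd := add_le_add h1 h2
        rw [← EReal.coe_add] at hadd
        refine le_trans (EReal.coe_le_coe_iff.mpr ?_) hadd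
        have hp' : p (y - x₀) = p (y - x) + p (x - x₀) := by
          rw [← map_add]; congr 1; abel
        have hr1 : ‖y - x‖ ^ (1+s) ≤ (K * t) ^ (1+s) :=
          Real.rpow_le_rpow (norm_nonneg _) hcase h1s.le
        have hr2 : ‖y - x₀‖ ^ (1+s) ≤ ((K+1) * t) ^ (1+s) :=
          Real.rpow_le_rpow (norm_nonneg _) (le_trans htri (by linarith)) h1s.le
        have hb1 : c₂ * (K * t) ^ (1+s) ≤ c₂ * ‖y - x‖ ^ (1+s) :=
          mul_le_mul_of_nonpos_left hr1 hc₂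
        have hb2 : c₁ * ((K+1) * t) ^ (1+s) ≤ c₁ * ‖y - x₀‖ ^ (1+s) :=
          mul_le_mul_of_nonpos_left hr2 hc₁
        rw [Real.mul_rpow hK0.le ht0] at hb1
        rw [Real.mul_rpow (by linarith : (0:ℝ) ≤ K + 1) ht0] at hb2
        have hkey : C * t ^ (1+s) ≤ c₂ * ‖y - x‖ ^ (1+s) + c₁ * ‖y - x₀‖ ^ (1+s) := by
          have e : C * t ^ (1+s)
              = c₂ * (K ^ (1+s) * t ^ (1+s)) + c₁ * ((K+1) ^ (1+s) * t ^ (1+s)) := by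
            simp only [hC]; ring
          rw [e]; linarith
        rw [hp']
        linarith
      · push_neg at hcase
        have hadd : ((m * ‖y - x‖ + fy : ℝ) : EReal) ≤ φ (y - x) + f y := by
          rw [EReal.coe_add]
          exact add_le_add (hcoer _) (le_of_eq hfyr.symm)
        refine le_trans (EReal.coe_le_coe_iff.mpr ?_) hadd
        have hpb : p (x - x₀) ≤ ‖p‖ * t := by
          calc p (x - x₀) ≤ |p (x - x₀)| := le_abs_self _
          _ = ‖p (x - x₀)‖ := (Real.norm_eq_abs _).symm
          _ ≤ ‖p‖ * ‖x - x₀‖ := p.le_opNorm _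
        have hCt : C * t ^ (1+s) ≤ 0 :=
          mul_nonpos_of_nonpos_of_nonneg hC0 (Real.rpow_nonneg ht0 _)
        have habs : F0 - ℓ * ‖y - x₀‖ ≤ fy := by
          have h := abs_le.mp hlipy
          linarith [h.1]
        have hA : ℓ * ‖y - x₀‖ ≤ ℓ * (‖y - x‖ + t) := mul_le_mul_of_nonneg_left htri hℓ0
        have hB : (m - ℓ) * (K * t) ≤ (m - ℓ) * ‖y - x‖ :=
          mul_le_mul_of_nonneg_left hcase.le hmℓ.le
        have hKval : (m - ℓ) * K = ℓ + ‖p‖ + (m - ℓ) := by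
          simp only [hK]; field_simp
        have hKt : (ℓ + ‖p‖ + (m - ℓ)) * t ≤ (m - ℓ) * ‖y - x‖ := by
          rw [← hKval, mul_assoc]; exact hB
        nlinarith [hpb, hCt, habs, hA, hKt, ht0, norm_nonneg (y - x)]
end
end
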